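/- arXiv:1910.00670 — 4 statements merged into one kernel-verified Lean document; each statement's English description precedes it below -/
import Mathlib

section
/- The coproduct Δ_• defines a right pre-Lie coalgebra structure on Tub: for every basis element (Γ,T), one has ((Id ⊗ Δ_• − Δ_• ⊗ Id) ∘ Δ_•)(Γ,T) = ((τ ⊗ Id) ∘ (Id ⊗ Δ_• − Δ_• ⊗ Id) ∘ Δ_•)(Γ,T), where τ is the twisting map τ(x ⊗ y) = y ⊗ x. Equivalently, (Id ⊗ Δ_• − Δ_• ⊗ Id)(Δ_•(Γ,T)) equals the sum over all ordered pairs (t₁,t₂) of disjoint tubes of T of (Γ_{t₁},T|_{t₁}) ⊗ (Γ_{t₂},T|_{t₂}) ⊗ (Γ_{{t₁,t₂}}^*, T_{{t₁,t₂}}^*), which is symmetric in its first two tensor factors. -/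
open scoped Classical
open TensorProduct

noncomputable section

/-- A finite simple graph whose vertices are a finite set of (totally ordered) naturals. -/
structure FinGraph : Type where
  verts : Finset ℕ
  Adj : ℕ → ℕ → Prop
  symm : ∀ v w, Adj v w → Adj w v
  loopless : ∀ v, ¬ Adj v v
  support : ∀ v w, Adj v w → v ∈ verts ∧ w ∈ verts

namespace CDTub

/-- Connectivity of a vertex set within a graph: any two of its vertices are joined by a
walk staying inside the set. -/
def VConn (G : FinGraph) (s : Finset ℕ) : Prop :=
  ∀ v ∈ s, ∀ w ∈ s, Relation.ReflTransGen (fun a b => a ∈ s ∧ b ∈ s ∧ G.Adj a b) v w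

/-- A tube: a nonempty set of vertices inducing a connected subgraph. -/
def IsTube (G : FinGraph) (t : Finset ℕ) : Prop :=
  t.Nonempty ∧ t ⊆ G.verts ∧ VConn G t

/-- A connected (nonempty) graph: the universal tube is a tube. -/
def IsConnGraph (G : FinGraph) : Prop := IsTube G G.verts

/-- Two vertex sets are far apart: disjoint and with no edge between them. -/
def FarApart (G : FinGraph) (a b : Finset ℕ) : Prop :=
  Disjoint a b ∧ ¬ ∃ v ∈ a, ∃ w ∈ b, G.Adj v w

/-- Compatible tubes: nested or far apart. -/
def Compatible (G : FinGraph) (a b : Finset ℕ) : Prop :=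
  a ⊆ b ∨ b ⊆ a ∨ FarApart G a b

/-- Linked tubes: disjoint and joined by an edge. -/
def Linked (G : FinGraph) (a b : Finset ℕ) : Prop :=
  Disjoint a b ∧ ∃ v ∈ a, ∃ w ∈ b, G.Adj v w

/-- A tubing of a connected graph: pairwise compatible tubes containing the universal tube. -/
def IsTubing (G : FinGraph) (T : Finset (Finset ℕ)) : Prop :=
  G.verts ∈ T ∧ (∀ t ∈ T, IsTube G t) ∧
    ∀ t ∈ T, ∀ t' ∈ T, t ≠ t' → Compatible G t t'

/-- Induced subgraph on a set of vertices. -/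
def induce (G : FinGraph) (t : Finset ℕ) : FinGraph where
  verts := t
  Adj v w := v ∈ t ∧ w ∈ t ∧ G.Adj v w
  symm := fun v w h => ⟨h.2.1, h.1, G.symm v w h.2.2⟩
  loopless := fun v h => G.loopless v h.2.2
  support := fun _ _ h => ⟨h.1, h.2.1⟩

/-- Simultaneous reconnected complement with respect to a family `F` of tubes
(for a single tube, or a family of pairwise far apart tubes, this is the (iterated)
reconnected complement). -/
def reconnAll (G : FinGraph) (F : Finset (Finset ℕ)) : FinGraph where
  verts := G.verts \ F.biUnion id
  Adj v w := v ≠ w ∧ v ∈ G.verts \ F.biUnion id ∧ w ∈ G.verts \ F.biUnion id ∧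
    (G.Adj v w ∨ ∃ f ∈ F, (∃ u ∈ f, G.Adj v u) ∧ ∃ u' ∈ f, G.Adj w u')
  symm := by
    rintro v w ⟨hne, hv, hw, h⟩
    refine ⟨hne.symm, hw, hv, ?_⟩
    rcases h with h | ⟨f, hf, h1, h2⟩
    · exact Or.inl (G.symm _ _ h)
    · exact Or.inr ⟨f, hf, h2, h1⟩
  loopless := fun v h => h.1 rfl
  support := fun _ _ h => ⟨h.2.1, h.2.2.1⟩

/-- Reconnected complement `Γ_t^*` of a graph with respect to a tube. -/
def reconn (G : FinGraph) (t : Finset ℕ) : FinGraph := reconnAll G {t}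

/-- The proper tubes of a tubing. -/
def properTubes (G : FinGraph) (T : Finset (Finset ℕ)) : Finset (Finset ℕ) :=
  T.filter (fun s => s ≠ G.verts)

/-- The maximal proper tubes of a tubing. -/
def MaxtP (G : FinGraph) (T : Finset (Finset ℕ)) : Finset (Finset ℕ) :=
  (properTubes G T).filter (fun s => ∀ s' ∈ properTubes G T, s ⊆ s' → s = s')

/-- The iterated reconnected complement `Γ_T^*` with respect to the maximal proper tubes. -/
def gammaStar (G : FinGraph) (T : Finset (Finset ℕ)) : FinGraph :=
  reconnAll G (MaxtP G T)

/-- Restriction `T|_t` of a tubing to a tube. -/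
def restrictT (T : Finset (Finset ℕ)) (t : Finset ℕ) : Finset (Finset ℕ) :=
  T.filter (fun s => s ⊆ t)

/-- For a tube `s` of `Γ_T^*`, the tube `s̃` of `Γ`: the union of `s` with all maximal
proper tubes of `T` linked to `s`. -/
def tildeT (G : FinGraph) (T : Finset (Finset ℕ)) (s : Finset ℕ) : Finset ℕ :=
  s ∪ ((MaxtP G T).filter (fun m => Linked G m s)).biUnion id

/-- Substitution `T •_Γ S` of a tubing `S` of `Γ_T^*` into the tubing `T`. -/
def substT (G : FinGraph) (T S : Finset (Finset ℕ)) : Finset (Finset ℕ) :=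
  T ∪ S.image (tildeT G T)

/-- The `t`-substitution `γ_t(T;S) = T ∪ (T|_t •_{Γ_t} S)`. -/
def gammaSub (G : FinGraph) (T : Finset (Finset ℕ)) (t : Finset ℕ)
    (S : Finset (Finset ℕ)) : Finset (Finset ℕ) :=
  T ∪ substT (induce G t) (restrictT T t) S

/-- The tubing `T_t^*` induced on the reconnected complement `Γ_t^*`. -/
def indStar (T : Finset (Finset ℕ)) (t : Finset ℕ) : Finset (Finset ℕ) :=
  T.filter (fun s => Disjoint s t) ∪ (T.filter (fun s => t ⊂ s)).image (fun s => s \ t)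

/-- The operation `T ◇ S` of Definition 2.4(2). -/
def diamond (G : FinGraph) (T : Finset (Finset ℕ)) (t : Finset ℕ)
    (S : Finset (Finset ℕ)) : Finset (Finset ℕ) :=
  T ∪ S.filter (fun s => ¬ Linked G s t) ∪
    (S.filter (fun s => Linked G s t)).image (fun s => s ∪ t)

/-- The tubes of `T`, viewed as subsets of the subtype of vertices. -/
def tubeSets (G : FinGraph) (T : Finset (Finset ℕ)) : Set (Set {x // x ∈ G.verts}) :=
  {U | ∃ t ∈ T, U = {x : {x // x ∈ G.verts} | (x : ℕ) ∈ t}}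

/-- The topology on the vertex set generated by the tubes of `T`. -/
def tubingTop (G : FinGraph) (T : Finset (Finset ℕ)) :
    TopologicalSpace {x // x ∈ G.verts} :=
  TopologicalSpace.generateFrom (tubeSets G T)

/-- One-line notation of the permutation `σ_t`: the vertices of `t` in increasing order
followed by the remaining vertices in increasing order. -/
def sigmaList (X t : Finset ℕ) : List ℕ :=
  t.sort (· ≤ ·) ++ (X \ t).sort (· ≤ ·)

/-- Number of `Γ`-inversions of a permutation given by its one-line notation `l`:
pairs of positions `p < q` carrying values `a > b` which form an edge of `Γ`. -/
def invCount (G : FinGraph) (l : List ℕ) : ℕ :=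
  ((Finset.range l.length ×ˢ Finset.range l.length).filter
    (fun pq => pq.1 < pq.2 ∧ l.getD pq.2 0 < l.getD pq.1 0 ∧
      G.Adj (l.getD pq.1 0) (l.getD pq.2 0))).card

/-- The signature `sgn^Γ(σ) = (-1)^{inv_Γ(σ)}`. -/
def graphSgn (G : FinGraph) (l : List ℕ) : ℤ := (-1) ^ invCount G l

/-- Rank (1-based) of `v` inside a finite set `X` of naturals: the order-preserving
relabelling of `X` by `{1,…,|X|}`. -/
def rk (X : Finset ℕ) (v : ℕ) : ℕ := (X.filter (fun u => u ≤ v)).card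

/-- Order-preserving relabelling of a graph by the initial segment `{1,…,n}`. -/
def relabelG (G : FinGraph) : FinGraph where
  verts := G.verts.image (rk G.verts)
  Adj i j := i ≠ j ∧ ∃ v w, G.Adj v w ∧ i = rk G.verts v ∧ j = rk G.verts w
  symm := by
    rintro i j ⟨hne, v, w, h, hi, hj⟩
    exact ⟨hne.symm, w, v, G.symm _ _ h, hj, hi⟩
  loopless := fun _ h => h.1 rfl
  support := by
    rintro i j ⟨hne, v, w, h, hi, hj⟩
    exact ⟨Finset.mem_image.mpr ⟨v, (G.support _ _ h).1, hi.symm⟩,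
      Finset.mem_image.mpr ⟨w, (G.support _ _ h).2, hj.symm⟩⟩

/-- Order-preserving relabelling of a subset of `X`. -/
def relabelF (X t : Finset ℕ) : Finset ℕ := t.image (rk X)

/-- Order-preserving relabelling of a family of subsets of `X`. -/
def relabelT (X : Finset ℕ) (T : Finset (Finset ℕ)) : Finset (Finset ℕ) :=
  T.image (relabelF X)

/-- Connected components (in `G`) of a set of vertices. -/
def comps (G : FinGraph) (s : Finset ℕ) : Finset (Finset ℕ) :=
  s.image (fun v => s.filter (fun w =>
    Relation.ReflTransGen (fun a b => a ∈ s ∧ b ∈ s ∧ G.Adj a b) v w))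

/-- The restriction map `res_Ω^Γ` on tubings: replace each tube by its connected
components in `Ω`. -/
def resT (Om : FinGraph) (T : Finset (Finset ℕ)) : Finset (Finset ℕ) :=
  T.biUnion (comps Om)

/-- Shift of a vertex set by `n`. -/
def shiftF (n : ℕ) (s : Finset ℕ) : Finset ℕ := s.image (fun v => v + n)

/-- Shift of a family of vertex sets by `n`. -/
def shiftT (n : ℕ) (S : Finset (Finset ℕ)) : Finset (Finset ℕ) := S.image (shiftF n)

/-- Shift of a graph by `n`. -/
def shiftG (n : ℕ) (G : FinGraph) : FinGraph where
  verts := shiftF n G.verts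
  Adj v w := ∃ a b, G.Adj a b ∧ v = a + n ∧ w = b + n
  symm := by
    rintro v w ⟨a, b, h, rfl, rfl⟩
    exact ⟨b, a, G.symm _ _ h, rfl, rfl⟩
  loopless := by
    rintro v ⟨a, b, h, ha, hb⟩
    have : a = b := by omega
    exact G.loopless b (this ▸ h)
  support := by
    rintro v w ⟨a, b, h, rfl, rfl⟩
    exact ⟨Finset.mem_image.mpr ⟨a, (G.support _ _ h).1, rfl⟩,
      Finset.mem_image.mpr ⟨b, (G.support _ _ h).2, rfl⟩⟩

/-- `X_T` : the vertices belonging to no proper tube of `T`. -/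
def freeVerts (G : FinGraph) (T : Finset (Finset ℕ)) : Finset ℕ :=
  G.verts.filter (fun v => ∀ s ∈ T, s ≠ G.verts → v ∉ s)

/-- The endpoint `max X_T` of the joining edge. -/
def joinA (G : FinGraph) (T : Finset (Finset ℕ)) : ℕ :=
  WithBot.unbotD 0 (freeVerts G T).max

/-- The endpoint `n + min X_S` of the joining edge. -/
def joinB (Om : FinGraph) (S : Finset (Finset ℕ)) (n : ℕ) : ℕ :=
  n + WithTop.untopD 0 (freeVerts Om S).min

/-- Vertex set of the joined graph `Γ ∪_{T,S} Ω`. -/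
def joinVerts (G Om : FinGraph) (n : ℕ) : Finset ℕ := G.verts ∪ shiftF n Om.verts

/-- The joined graph `Γ ∪_{T,S} Ω`: the disjoint union (with `Ω` shifted by `n`)
plus one edge from `max X_T` to `n + min X_S`. -/
def joinG (G Om : FinGraph) (T S : Finset (Finset ℕ)) (n : ℕ) : FinGraph where
  verts := joinVerts G Om n
  Adj v w := G.Adj v w ∨ (shiftG n Om).Adj v w ∨
    (v ≠ w ∧ v ∈ joinVerts G Om n ∧ w ∈ joinVerts G Om n ∧
      ((v = joinA G T ∧ w = joinB Om S n) ∨ (w = joinA G T ∧ v = joinB Om S n)))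
  symm := by
    rintro v w (h | h | ⟨hne, hv, hw, hc⟩)
    · exact Or.inl (G.symm _ _ h)
    · exact Or.inr (Or.inl ((shiftG n Om).symm _ _ h))
    · exact Or.inr (Or.inr ⟨hne.symm, hw, hv, hc.symm⟩)
  loopless := by
    rintro v (h | h | ⟨hne, _⟩)
    · exact G.loopless v h
    · exact (shiftG n Om).loopless v h
    · exact hne rfl
  support := by
    rintro v w (h | h | ⟨_, hv, hw, _⟩)
    · exact ⟨Finset.mem_union_left _ (G.support _ _ h).1,
        Finset.mem_union_left _ (G.support _ _ h).2⟩
    · exact ⟨Finset.mem_union_right _ ((shiftG n Om).support _ _ h).1,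
        Finset.mem_union_right _ ((shiftG n Om).support _ _ h).2⟩
    · exact ⟨hv, hw⟩

/-- `T ▷ S`. -/
def trR (G Om : FinGraph) (T S : Finset (Finset ℕ)) (n : ℕ) : Finset (Finset ℕ) :=
  T ∪ shiftT n (properTubes Om S) ∪ {joinVerts G Om n}

/-- `T ◁ S`. -/
def trL (G Om : FinGraph) (T S : Finset (Finset ℕ)) (n : ℕ) : Finset (Finset ℕ) :=
  properTubes G T ∪ shiftT n S ∪ {joinVerts G Om n}

/-- `T ⊥ S`. -/
def tPerp (G Om : FinGraph) (T S : Finset (Finset ℕ)) (n : ℕ) : Finset (Finset ℕ) :=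
  properTubes G T ∪ shiftT n (properTubes Om S) ∪ {joinVerts G Om n}

/-- Equality of graphs: same vertex set and same edges. -/
def GEq (A B : FinGraph) : Prop :=
  A.verts = B.verts ∧ ∀ v w, A.Adj v w ↔ B.Adj v w

/-- Index type for the basis of `Tub⁺`: `none` is the unit `1`, `some (Γ,T)` is a pair. -/
abbrev TubIdx : Type := Option (FinGraph × Finset (Finset ℕ))

/-- A pair `(Γ,T)` relabelled order-preservingly to standard vertex set, identified
with the unit `1` when the vertex set is empty. -/
def embPair (G : FinGraph) (T : Finset (Finset ℕ)) : TubIdx :=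
  if G.verts = ∅ then none else some (relabelG G, relabelT G.verts T)

/-- The value of the pre-Lie coproduct `Δ_•` on a basis element. -/
def deltaFun (K : Type) [CommRing K] (i : TubIdx) :
    (TubIdx →₀ K) ⊗[K] (TubIdx →₀ K) :=
  match i with
  | none => Finsupp.single (none : TubIdx) (1 : K) ⊗ₜ[K] Finsupp.single (none : TubIdx) (1 : K)
  | some (G, T) =>
      (∑ t ∈ T, (Finsupp.single (embPair (induce G t) (restrictT T t)) (1 : K)) ⊗ₜ[K]
        (Finsupp.single (embPair (reconn G t) (indStar T t)) (1 : K)))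
      + (Finsupp.single (none : TubIdx) (1 : K)) ⊗ₜ[K]
          (Finsupp.single (some (G, T) : TubIdx) (1 : K))

/-- The pre-Lie coproduct `Δ_•` on `Tub⁺`, the free module on `TubIdx`. -/
def delta (K : Type) [CommRing K] :
    (TubIdx →₀ K) →ₗ[K] (TubIdx →₀ K) ⊗[K] (TubIdx →₀ K) :=
  Finsupp.lift ((TubIdx →₀ K) ⊗[K] (TubIdx →₀ K)) K TubIdx (deltaFun K)


/-! ### Auxiliary lemmas -/

theorem _root_.FinGraph.ext' {A B : FinGraph} (hv : A.verts = B.verts)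
    (ha : ∀ v w, A.Adj v w ↔ B.Adj v w) : A = B := by
  cases A; cases B
  simp only [FinGraph.mk.injEq]
  exact ⟨hv, funext fun v => funext fun w => propext (ha v w)⟩

theorem rk_lt_rk {X : Finset ℕ} {v w : ℕ} (hv : v ∈ X) (hw : w ∈ X) (h : v < w) :
    rk X v < rk X w := by
  apply Finset.card_lt_card
  constructor
  · intro u hu
    rcases Finset.mem_filter.mp hu with ⟨h1, h2⟩
    exact Finset.mem_filter.mpr ⟨h1, by omega⟩
  · intro hsub
    have := hsub (Finset.mem_filter.mpr ⟨hw, le_refl w⟩)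
    have := (Finset.mem_filter.mp this).2
    omega

theorem rk_strictMonoOn (X : Finset ℕ) : StrictMonoOn (rk X) X :=
  fun v hv w hw h => rk_lt_rk hv hw h

theorem rk_injOn (X : Finset ℕ) : Set.InjOn (rk X) X :=
  (rk_strictMonoOn X).injOn

theorem rk_le_iff {X : Finset ℕ} {v w : ℕ} (hv : v ∈ X) (hw : w ∈ X) :
    rk X v ≤ rk X w ↔ v ≤ w := by
  constructor
  · intro h
    by_contra hc
    exact absurd (rk_lt_rk hw hv (by omega)) (by omega)
  · intro h
    rcases eq_or_lt_of_le h with rfl | h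
    · exact le_refl _
    · exact (rk_lt_rk hv hw h).le

theorem rk_eq_iff {X : Finset ℕ} {v w : ℕ} (hv : v ∈ X) (hw : w ∈ X) :
    rk X v = rk X w ↔ v = w :=
  ⟨fun h => rk_injOn X hv hw h, fun h => h ▸ rfl⟩

/-- Composition rule for ranks along a strictly monotone map. -/
theorem rk_image {X : Finset ℕ} {f : ℕ → ℕ} (hf : StrictMonoOn f X) {v : ℕ} (hv : v ∈ X) :
    rk (X.image f) (f v) = rk X v := by
  unfold rk
  rw [show (X.image f).filter (fun u => u ≤ f v) = (X.filter (fun u => u ≤ v)).image f by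
    ext u'
    simp only [Finset.mem_filter, Finset.mem_image]
    constructor
    · rintro ⟨⟨u, hu, rfl⟩, hle⟩
      exact ⟨u, ⟨hu, (hf.le_iff_le hu hv).mp hle⟩, rfl⟩
    · rintro ⟨u, ⟨hu, hle⟩, rfl⟩
      exact ⟨⟨u, hu, rfl⟩, (hf.le_iff_le hu hv).mpr hle⟩]
  exact Finset.card_image_of_injOn (hf.injOn.mono (by
    intro u hu; exact (Finset.mem_filter.mp hu).1))

theorem relabelF_mem_iff {X t : Finset ℕ} (ht : t ⊆ X) {v : ℕ} (hv : v ∈ X) :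
    rk X v ∈ relabelF X t ↔ v ∈ t := by
  unfold relabelF
  simp only [Finset.mem_image]
  constructor
  · rintro ⟨u, hu, h⟩
    rwa [rk_eq_iff (ht hu) hv |>.mp h] at hu
  · intro h; exact ⟨v, h, rfl⟩

theorem relabelF_subset_iff {X s t : Finset ℕ} (hs : s ⊆ X) (ht : t ⊆ X) :
    relabelF X s ⊆ relabelF X t ↔ s ⊆ t := by
  constructor
  · intro h v hv
    have := h (Finset.mem_image.mpr ⟨v, hv, rfl⟩)
    exact (relabelF_mem_iff ht (hs hv)).mp this
  · intro h
    exact Finset.image_subset_image h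

theorem relabelF_inj {X s t : Finset ℕ} (hs : s ⊆ X) (ht : t ⊆ X)
    (h : relabelF X s = relabelF X t) : s = t :=
  Finset.Subset.antisymm
    ((relabelF_subset_iff hs ht).mp h.le)
    ((relabelF_subset_iff ht hs).mp h.ge)

theorem relabelF_sdiff {X s t : Finset ℕ} (hs : s ⊆ X) (ht : t ⊆ X) :
    relabelF X (s \ t) = relabelF X s \ relabelF X t := by
  ext x
  unfold relabelF
  simp only [Finset.mem_image, Finset.mem_sdiff]
  constructor
  · rintro ⟨v, ⟨hvs, hvt⟩, rfl⟩
    exact ⟨⟨v, hvs, rfl⟩, fun hc => by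
      rcases hc with ⟨w, hw, hww⟩
      exact hvt (by rwa [rk_eq_iff (ht hw) (hs hvs) |>.mp hww] at hw)⟩
  · rintro ⟨⟨v, hv, rfl⟩, hnot⟩
    exact ⟨v, ⟨hv, fun hc => hnot ⟨v, hc, rfl⟩⟩, rfl⟩

theorem relabelF_disjoint_iff {X s t : Finset ℕ} (hs : s ⊆ X) (ht : t ⊆ X) :
    Disjoint (relabelF X s) (relabelF X t) ↔ Disjoint s t := by
  simp only [Finset.disjoint_left]
  constructor
  · intro h v hv hvt
    exact h (Finset.mem_image.mpr ⟨v, hv, rfl⟩) (Finset.mem_image.mpr ⟨v, hvt, rfl⟩)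
  · rintro h x hx hxt
    rcases Finset.mem_image.mp hx with ⟨v, hv, rfl⟩
    exact h hv ((relabelF_mem_iff ht (hs hv)).mp hxt)

theorem relabelF_ssubset_iff {X s t : Finset ℕ} (hs : s ⊆ X) (ht : t ⊆ X) :
    relabelF X s ⊂ relabelF X t ↔ s ⊂ t := by
  constructor
  · rintro ⟨h1, h2⟩
    refine ⟨(relabelF_subset_iff hs ht).mp h1, fun hc => h2 ((relabelF_subset_iff ht hs).mpr hc)⟩
  · rintro ⟨h1, h2⟩
    exact ⟨(relabelF_subset_iff hs ht).mpr h1, fun hc => h2 ((relabelF_subset_iff ht hs).mp hc)⟩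

theorem relabelF_eq_empty_iff {X t : Finset ℕ} : relabelF X t = ∅ ↔ t = ∅ := by
  unfold relabelF; simp


theorem reconn_verts (G : FinGraph) (t : Finset ℕ) : (reconn G t).verts = G.verts \ t := by
  simp [reconn, reconnAll]

theorem reconn_adj (G : FinGraph) (t : Finset ℕ) (v w : ℕ) :
    (reconn G t).Adj v w ↔ v ≠ w ∧ v ∈ G.verts \ t ∧ w ∈ G.verts \ t ∧
      (G.Adj v w ∨ ((∃ u ∈ t, G.Adj v u) ∧ ∃ u' ∈ t, G.Adj w u')) := by
  simp [reconn, reconnAll]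

theorem mem_restrictT {T : Finset (Finset ℕ)} {t x : Finset ℕ} :
    x ∈ restrictT T t ↔ x ∈ T ∧ x ⊆ t := by
  simp [restrictT]

theorem mem_indStar {T : Finset (Finset ℕ)} {t x : Finset ℕ} :
    x ∈ indStar T t ↔ (x ∈ T ∧ Disjoint x t) ∨ ∃ s ∈ T, t ⊂ s ∧ s \ t = x := by
  simp only [indStar, Finset.mem_union, Finset.mem_filter, Finset.mem_image]
  tauto

theorem embPair_congr (G H : FinGraph) (T S : Finset (Finset ℕ)) (f : ℕ → ℕ)
    (hf : StrictMonoOn f G.verts)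
    (hv : H.verts = G.verts.image f)
    (ha : ∀ v w, H.Adj v w ↔ ∃ a ∈ G.verts, ∃ b ∈ G.verts, G.Adj a b ∧ v = f a ∧ w = f b)
    (hS : S = T.image (fun t => t.image f))
    (hT : ∀ t ∈ T, t ⊆ G.verts) :
    embPair H S = embPair G T := by
  by_cases hGe : G.verts = ∅
  · have hHe : H.verts = ∅ := by rw [hv, hGe]; simp
    unfold embPair
    rw [if_pos hGe, if_pos hHe]
  · have hHe : H.verts ≠ ∅ := by
      rw [hv]
      simpa [Finset.image_eq_empty] using hGe
    have hrk0 : ∀ v ∈ G.verts, rk (G.verts.image f) (f v) = rk G.verts v := by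
      intro v hv'
      exact rk_image hf hv'
    have hrk : ∀ v ∈ G.verts, rk H.verts (f v) = rk G.verts v := by
      intro v hv'
      rw [hv]
      exact rk_image hf hv'
    unfold embPair
    rw [if_neg hGe, if_neg hHe]
    congr 1
    refine Prod.ext ?_ ?_
    · -- relabelG H = relabelG G
      apply FinGraph.ext'
      · show H.verts.image (rk H.verts) = G.verts.image (rk G.verts)
        rw [hv, Finset.image_image]
        exact Finset.image_congr (fun v hv' => hrk0 v hv')
      · intro i j
        show (i ≠ j ∧ ∃ v w, H.Adj v w ∧ i = rk H.verts v ∧ j = rk H.verts w) ↔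
          (i ≠ j ∧ ∃ v w, G.Adj v w ∧ i = rk G.verts v ∧ j = rk G.verts w)
        constructor
        · rintro ⟨hne, v, w, hvw, rfl, rfl⟩
          rcases (ha v w).mp hvw with ⟨a, haG, b, hbG, hab, rfl, rfl⟩
          rw [hrk a haG, hrk b hbG] at hne ⊢
          exact ⟨hne, a, b, hab, rfl, rfl⟩
        · rintro ⟨hne, a, b, hab, rfl, rfl⟩
          obtain ⟨haG, hbG⟩ := G.support a b hab
          rw [← hrk a haG, ← hrk b hbG] at hne ⊢
          exact ⟨hne, f a, f b, (ha _ _).mpr ⟨a, haG, b, hbG, hab, rfl, rfl⟩, rfl, rfl⟩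
    · -- relabelT H.verts S = relabelT G.verts T
      show S.image (relabelF H.verts) = T.image (relabelF G.verts)
      rw [hS, Finset.image_image]
      refine Finset.image_congr ?_
      intro t ht
      show relabelF H.verts (t.image f) = relabelF G.verts t
      unfold relabelF
      rw [Finset.image_image]
      exact Finset.image_congr (fun v hv' => hrk v (hT t ht hv'))


theorem delta_single (K : Type) [CommRing K] (i : TubIdx) :
    delta K (Finsupp.single i 1) = deltaFun K i := by
  unfold delta
  rw [Finsupp.lift_apply, Finsupp.sum_single_index (by simp), one_smul]

theorem indStar_subset {G : FinGraph} {T : Finset (Finset ℕ)} {t : Finset ℕ}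
    (hT : ∀ s ∈ T, s ⊆ G.verts) :
    ∀ s ∈ indStar T t, s ⊆ G.verts \ t := by
  intro s hs
  rcases mem_indStar.mp hs with ⟨hsT, hd⟩ | ⟨s', hs', hss, rfl⟩
  · intro x hx
    exact Finset.mem_sdiff.mpr ⟨hT s hsT hx, fun hc => Finset.disjoint_left.mp hd hx hc⟩
  · intro x hx
    rcases Finset.mem_sdiff.mp hx with ⟨h1, h2⟩
    exact Finset.mem_sdiff.mpr ⟨hT s' hs' h1, h2⟩

theorem deltaFun_embPair (K : Type) [CommRing K] (G : FinGraph) (T : Finset (Finset ℕ))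
    (hne : G.verts.Nonempty) (hT : ∀ t ∈ T, t ⊆ G.verts) :
    deltaFun K (embPair G T) =
      (∑ t ∈ T, (Finsupp.single (embPair (induce G t) (restrictT T t)) (1 : K)) ⊗ₜ[K]
        (Finsupp.single (embPair (reconn G t) (indStar T t)) (1 : K)))
      + (Finsupp.single (none : TubIdx) (1 : K)) ⊗ₜ[K]
          (Finsupp.single (embPair G T) (1 : K)) := by
  have hVne : G.verts ≠ ∅ := hne.ne_empty
  have hemb : embPair G T = some (relabelG G, relabelT G.verts T) := if_neg hVne
  rw [hemb]
  show (∑ t' ∈ relabelT G.verts T, _) + _ = _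
  congr 1
  · -- main sums agree
    have himg : relabelT G.verts T = T.image (relabelF G.verts) := rfl
    rw [himg, Finset.sum_image (fun s hs s' hs' h => relabelF_inj (hT s hs) (hT s' hs') h)]
    refine Finset.sum_congr rfl ?_
    intro t ht
    have htV : t ⊆ G.verts := hT t ht
    have hsm : StrictMonoOn (rk G.verts) (t : Set ℕ) :=
      (rk_strictMonoOn G.verts).mono (by exact_mod_cast htV)
    have hsm' : StrictMonoOn (rk G.verts) ((G.verts \ t : Finset ℕ) : Set ℕ) :=
      (rk_strictMonoOn G.verts).mono (by
        intro x hx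
        exact (Finset.mem_sdiff.mp (by exact_mod_cast hx)).1)
    congr 1
    · -- restriction part
      congr 1
      apply embPair_congr (induce G t) _ (restrictT T t) _ (rk G.verts) hsm rfl
      · -- adjacency
        intro v w
        show (v ∈ relabelF G.verts t ∧ w ∈ relabelF G.verts t ∧ (relabelG G).Adj v w) ↔ _
        constructor
        · rintro ⟨hvm, hwm, hne', a, b, hab, rfl, rfl⟩
          obtain ⟨haV, hbV⟩ := G.support a b hab
          have hat : a ∈ t := (relabelF_mem_iff htV haV).mp hvm
          have hbt : b ∈ t := (relabelF_mem_iff htV hbV).mp hwm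
          exact ⟨a, hat, b, hbt, ⟨hat, hbt, hab⟩, rfl, rfl⟩
        · rintro ⟨a, hat, b, hbt, ⟨_, _, hab⟩, rfl, rfl⟩
          have hne2 : a ≠ b := fun h => G.loopless b (h ▸ hab)
          refine ⟨Finset.mem_image.mpr ⟨a, hat, rfl⟩, Finset.mem_image.mpr ⟨b, hbt, rfl⟩,
            fun h => hne2 ((rk_eq_iff (htV hat) (htV hbt)).mp h), a, b, hab, rfl, rfl⟩
      · -- tubing image
        ext x
        simp only [mem_restrictT, Finset.mem_image, relabelT]
        constructor
        · rintro ⟨⟨s, hs, rfl⟩, hsub⟩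
          exact ⟨s, ⟨hs, (relabelF_subset_iff (hT s hs) htV).mp hsub⟩, rfl⟩
        · rintro ⟨s, ⟨hs, hsub⟩, rfl⟩
          exact ⟨⟨s, hs, rfl⟩, (relabelF_subset_iff (hT s hs) htV).mpr hsub⟩
      · intro s hs
        exact (mem_restrictT.mp hs).2
    · -- reconnected part
      congr 1
      apply embPair_congr (reconn G t) _ (indStar T t) _ (rk G.verts)
        (by rw [reconn_verts]; exact hsm')
      · -- verts
        rw [reconn_verts, reconn_verts]
        show (relabelG G).verts \ relabelF G.verts t = _
        have : (relabelG G).verts = relabelF G.verts G.verts := rfl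
        rw [this, ← relabelF_sdiff (le_refl G.verts) htV]
        rfl
      · -- adjacency
        intro v w
        simp only [reconn_adj, reconn_verts]
        constructor
        · rintro ⟨hvw, hvm, hwm, hd⟩
          have hv' : v ∈ relabelF G.verts (G.verts \ t) := by
            rw [relabelF_sdiff (le_refl G.verts) htV]; exact hvm
          have hw' : w ∈ relabelF G.verts (G.verts \ t) := by
            rw [relabelF_sdiff (le_refl G.verts) htV]; exact hwm
          rcases Finset.mem_image.mp hv' with ⟨a, haVt, rfl⟩
          rcases Finset.mem_image.mp hw' with ⟨b, hbVt, rfl⟩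
          have haV : a ∈ G.verts := (Finset.mem_sdiff.mp haVt).1
          have hbV : b ∈ G.verts := (Finset.mem_sdiff.mp hbVt).1
          have key : ∀ c u, c ∈ G.verts → (relabelG G).Adj (rk G.verts c) u →
              ∃ d, d ∈ G.verts ∧ u = rk G.verts d ∧ G.Adj c d := by
            rintro c u hcV ⟨hne', a', b', hab', he1, rfl⟩
            obtain ⟨ha'V, hb'V⟩ := G.support a' b' hab'
            have : a' = c := (rk_eq_iff ha'V hcV).mp he1.symm
            exact ⟨b', hb'V, rfl, this ▸ hab'⟩
          refine ⟨a, haVt, b, hbVt, ⟨fun h => hvw (h ▸ rfl), haVt, hbVt, ?_⟩, rfl, rfl⟩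
          rcases hd with h | ⟨⟨u, hu, hadj⟩, ⟨u', hu', hadj'⟩⟩
          · rcases key a _ haV h with ⟨d, hdV, hd2, hadj2⟩
            have : d = b := (rk_eq_iff hdV hbV).mp hd2.symm
            exact Or.inl (this ▸ hadj2)
          · rcases Finset.mem_image.mp hu with ⟨c, hct, rfl⟩
            rcases Finset.mem_image.mp hu' with ⟨c', hc't, rfl⟩
            rcases key a _ haV hadj with ⟨d, hdV, hd2, hadj2⟩
            rcases key b _ hbV hadj' with ⟨d', hd'V, hd'2, hadj'2⟩
            have : d = c := (rk_eq_iff hdV (htV hct)).mp hd2.symm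
            have h2 : d' = c' := (rk_eq_iff hd'V (htV hc't)).mp hd'2.symm
            exact Or.inr ⟨⟨c, hct, this ▸ hadj2⟩, ⟨c', hc't, h2 ▸ hadj'2⟩⟩
        · rintro ⟨a, haVt, b, hbVt, ⟨hab, _, _, hd⟩, rfl, rfl⟩
          have haV : a ∈ G.verts := (Finset.mem_sdiff.mp haVt).1
          have hbV : b ∈ G.verts := (Finset.mem_sdiff.mp hbVt).1
          have hmem : ∀ c, c ∈ G.verts \ t →
              rk G.verts c ∈ (relabelG G).verts \ relabelF G.verts t := by
            intro c hc
            rw [show (relabelG G).verts = relabelF G.verts G.verts from rfl,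
              ← relabelF_sdiff (le_refl G.verts) htV]
            exact Finset.mem_image.mpr ⟨c, hc, rfl⟩
          refine ⟨fun h => hab ((rk_eq_iff haV hbV).mp h), hmem a haVt, hmem b hbVt, ?_⟩
          have mkAdj : ∀ c d, c ∈ G.verts → d ∈ G.verts → G.Adj c d →
              (relabelG G).Adj (rk G.verts c) (rk G.verts d) := by
            intro c d hcV hdV h
            exact ⟨fun he => G.loopless d (((rk_eq_iff hcV hdV).mp he) ▸ h), c, d, h, rfl, rfl⟩
          rcases hd with h | ⟨⟨u, hu, hadj⟩, ⟨u', hu', hadj'⟩⟩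
          · exact Or.inl (mkAdj a b haV hbV h)
          · exact Or.inr ⟨⟨rk G.verts u, Finset.mem_image.mpr ⟨u, hu, rfl⟩,
              mkAdj a u haV (htV hu) hadj⟩,
              ⟨rk G.verts u', Finset.mem_image.mpr ⟨u', hu', rfl⟩,
              mkAdj b u' hbV (htV hu') hadj'⟩⟩
      · -- tubing image
        ext x
        simp only [mem_indStar, Finset.mem_image, relabelT]
        constructor
        · rintro (⟨⟨s, hs, rfl⟩, hd⟩ | ⟨s', ⟨s, hs, rfl⟩, hss, rfl⟩)
          · exact ⟨s, Or.inl ⟨hs,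
              (relabelF_disjoint_iff (hT s hs) htV).mp hd⟩, rfl⟩
          · refine ⟨s \ t, Or.inr ⟨s, hs,
              (relabelF_ssubset_iff htV (hT s hs)).mp hss, rfl⟩, ?_⟩
            exact relabelF_sdiff (hT s hs) htV
        · rintro ⟨y, (⟨hyT, hd⟩ | ⟨s, hs, hss, rfl⟩), rfl⟩
          · exact Or.inl ⟨⟨y, hyT, rfl⟩,
              (relabelF_disjoint_iff (hT y hyT) htV).mpr hd⟩
          · refine Or.inr ⟨relabelF G.verts s, ⟨s, hs, rfl⟩,
              (relabelF_ssubset_iff htV (hT s hs)).mpr hss, ?_⟩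
            exact (relabelF_sdiff (hT s hs) htV).symm
      · intro s hs
        rw [reconn_verts]
        exact indStar_subset hT s hs


theorem induce_induce (G : FinGraph) {s t : Finset ℕ} (h : s ⊆ t) :
    induce (induce G t) s = induce G s := by
  refine FinGraph.ext' ?_ ?_
  · rfl
  intro v w
  show v ∈ s ∧ w ∈ s ∧ (v ∈ t ∧ w ∈ t ∧ G.Adj v w) ↔ v ∈ s ∧ w ∈ s ∧ G.Adj v w
  constructor
  · rintro ⟨h1, h2, _, _, h3⟩; exact ⟨h1, h2, h3⟩
  · rintro ⟨h1, h2, h3⟩; exact ⟨h1, h2, h h1, h h2, h3⟩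

theorem restrictT_restrictT (T : Finset (Finset ℕ)) {s t : Finset ℕ} (h : s ⊆ t) :
    restrictT (restrictT T t) s = restrictT T s := by
  ext x
  simp only [mem_restrictT]
  constructor
  · rintro ⟨⟨h1, _⟩, h2⟩; exact ⟨h1, h2⟩
  · rintro ⟨h1, h2⟩; exact ⟨⟨h1, h2.trans h⟩, h2⟩

theorem induce_univ (G : FinGraph) : induce G G.verts = G := by
  refine FinGraph.ext' ?_ ?_
  · rfl
  intro v w
  show v ∈ G.verts ∧ w ∈ G.verts ∧ G.Adj v w ↔ G.Adj v w
  exact ⟨fun h => h.2.2, fun h => ⟨(G.support v w h).1, (G.support v w h).2, h⟩⟩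

theorem restrictT_univ {G : FinGraph} {T : Finset (Finset ℕ)}
    (hT : ∀ t ∈ T, t ⊆ G.verts) : restrictT T G.verts = T := by
  ext x
  simp only [mem_restrictT]
  exact ⟨fun h => h.1, fun h => ⟨h, hT x h⟩⟩

theorem embPair_of_empty {G : FinGraph} (h : G.verts = ∅) (T : Finset (Finset ℕ)) :
    embPair G T = none := if_pos h

theorem farApart_symm {G : FinGraph} {a b : Finset ℕ} (h : FarApart G a b) :
    FarApart G b a := by
  obtain ⟨h1, h2⟩ := h
  refine ⟨h1.symm, fun ⟨v, hv, w, hw, hadj⟩ => h2 ⟨w, hw, v, hv, G.symm _ _ hadj⟩⟩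

theorem tubing_far {G : FinGraph} {T : Finset (Finset ℕ)} (hT : IsTubing G T)
    {t ρ : Finset ℕ} (ht : t ∈ T) (hρ : ρ ∈ T) (hd : Disjoint t ρ) : FarApart G t ρ := by
  obtain ⟨_, htube, hcomp⟩ := hT
  have htne : t.Nonempty := (htube t ht).1
  have hρne : ρ.Nonempty := (htube ρ hρ).1
  obtain ⟨x, hx⟩ := htne
  obtain ⟨y, hy⟩ := hρne
  have hne : t ≠ ρ := by
    rintro rfl
    exact Finset.disjoint_left.mp hd hx hx
  rcases hcomp t ht ρ hρ hne with h | h | h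
  · exact absurd (h hx) (fun c => Finset.disjoint_left.mp hd hx c)
  · exact absurd (h hy) (fun c => Finset.disjoint_left.mp hd c hy)
  · exact h

/-- A walk inside a connected set must cross the boundary of a proper subset. -/
theorem exists_exit {G : FinGraph} {ρ t : Finset ℕ} (hconn : VConn G ρ)
    (hts : t ⊆ ρ) (hne : t.Nonempty) (hnsub : ¬ ρ ⊆ t) :
    ∃ b ∈ ρ, b ∉ t ∧ ∃ a ∈ t, G.Adj b a := by
  obtain ⟨v, hv⟩ := hne
  obtain ⟨w, hwρ, hwt⟩ := Finset.not_subset.mp hnsub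
  have key : ∀ x, Relation.ReflTransGen
      (fun a b => a ∈ ρ ∧ b ∈ ρ ∧ G.Adj a b) x v → x ∉ t →
      ∃ b ∈ ρ, b ∉ t ∧ ∃ a ∈ t, G.Adj b a := by
    intro x hp
    induction hp using Relation.ReflTransGen.head_induction_on with
    | refl => intro hx; exact absurd hv hx
    | head hac hcb ih =>
      rename_i a c
      intro hx
      by_cases hc : c ∈ t
      · exact ⟨a, hac.1, hx, c, hc, hac.2.2⟩
      · exact ih hc
  exact key w (hconn w hwρ v (hts hv)) hwt

theorem tube_not_union {G : FinGraph} {T : Finset (Finset ℕ)} (hT : IsTubing G T)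
    {t ρ σ : Finset ℕ} (hfar : FarApart G t ρ) (htne : t.Nonempty) (hρne : ρ.Nonempty)
    (hσ : σ ∈ T) (h : σ = t ∪ ρ) : False := by
  obtain ⟨_, htube, _⟩ := hT
  have hconn := (htube σ hσ).2.2
  obtain ⟨v, hv⟩ := htne
  obtain ⟨w, hw⟩ := hρne
  have hvσ : v ∈ σ := h ▸ Finset.mem_union_left _ hv
  have hwσ : w ∈ σ := h ▸ Finset.mem_union_right _ hw
  have hpath := hconn v hvσ w hwσ
  have key : ∀ x, Relation.ReflTransGen
      (fun a b => a ∈ σ ∧ b ∈ σ ∧ G.Adj a b) x w → x ∈ t → False := by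
    intro x hp
    induction hp using Relation.ReflTransGen.head_induction_on with
    | refl => intro hx; exact Finset.disjoint_left.mp hfar.1 hx hw
    | head hac hcb ih =>
      rename_i a c
      intro hx
      have hcσ : c ∈ σ := hac.2.1
      rw [h] at hcσ
      rcases Finset.mem_union.mp hcσ with hc | hc
      · exact ih hc
      · exact hfar.2 ⟨a, hx, c, hc, hac.2.2⟩
  exact key v hpath hv


theorem sdiff_sdiff_helper {σ t ρ : Finset ℕ} (htρ : t ⊆ ρ) :
    (σ \ t) \ (ρ \ t) = σ \ ρ := by
  ext a
  simp only [Finset.mem_sdiff]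
  constructor
  · rintro ⟨⟨h1, h2⟩, h3⟩
    exact ⟨h1, fun hc => h3 ⟨hc, h2⟩⟩
  · rintro ⟨h1, h2⟩
    exact ⟨⟨h1, fun hc => h2 (htρ hc)⟩, fun hc => h2 hc.1⟩

theorem sdiff_sdiff_verts {V t ρ : Finset ℕ} (htρ : t ⊆ ρ) :
    (V \ t) \ (ρ \ t) = V \ ρ := sdiff_sdiff_helper htρ

/-- (a) Restriction of the reconnected complement to a nested tube. -/
theorem induce_reconn {G : FinGraph} {t ρ : Finset ℕ} (htρ : t ⊆ ρ) (hρV : ρ ⊆ G.verts) :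
    induce (reconn G t) (ρ \ t) = reconn (induce G ρ) t := by
  refine FinGraph.ext' ?_ ?_
  · rw [reconn_verts]; rfl
  intro v w
  show v ∈ ρ \ t ∧ w ∈ ρ \ t ∧ (reconn G t).Adj v w ↔ _
  rw [reconn_adj, reconn_adj]
  constructor
  · rintro ⟨hv, hw, hne, _, _, hd⟩
    obtain ⟨hvρ, hvt⟩ := Finset.mem_sdiff.mp hv
    obtain ⟨hwρ, hwt⟩ := Finset.mem_sdiff.mp hw
    refine ⟨hne, by
        show v ∈ (induce G ρ).verts \ t
        exact Finset.mem_sdiff.mpr ⟨hvρ, hvt⟩, by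
        show w ∈ (induce G ρ).verts \ t
        exact Finset.mem_sdiff.mpr ⟨hwρ, hwt⟩, ?_⟩
    rcases hd with h | ⟨⟨u, hu, h1⟩, ⟨u', hu', h2⟩⟩
    · exact Or.inl ⟨hvρ, hwρ, h⟩
    · exact Or.inr ⟨⟨u, hu, hvρ, htρ hu, h1⟩, ⟨u', hu', hwρ, htρ hu', h2⟩⟩
  · rintro ⟨hne, hv, hw, hd⟩
    have hv' : v ∈ ρ \ t := hv
    have hw' : w ∈ ρ \ t := hw
    obtain ⟨hvρ, hvt⟩ := Finset.mem_sdiff.mp hv'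
    obtain ⟨hwρ, hwt⟩ := Finset.mem_sdiff.mp hw'
    refine ⟨hv', hw', hne, Finset.mem_sdiff.mpr ⟨hρV hvρ, hvt⟩,
      Finset.mem_sdiff.mpr ⟨hρV hwρ, hwt⟩, ?_⟩
    rcases hd with ⟨_, _, h⟩ | ⟨⟨u, hu, _, _, h1⟩, ⟨u', hu', _, _, h2⟩⟩
    · exact Or.inl h
    · exact Or.inr ⟨⟨u, hu, h1⟩, ⟨u', hu', h2⟩⟩

/-- (b) Restriction of the induced tubing to a nested tube. -/
theorem restrictT_indStar {T : Finset (Finset ℕ)} {t ρ : Finset ℕ} (htρ : t ⊆ ρ) :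
    restrictT (indStar T t) (ρ \ t) = indStar (restrictT T ρ) t := by
  ext x
  simp only [mem_restrictT, mem_indStar]
  constructor
  · rintro ⟨(⟨hxT, hd⟩ | ⟨σ, hσ, hts, rfl⟩), hsub⟩
    · exact Or.inl ⟨⟨hxT, (Finset.subset_sdiff.mp hsub).1⟩, hd⟩
    · refine Or.inr ⟨σ, ⟨hσ, fun a ha => ?_⟩, hts, rfl⟩
      by_cases hat : a ∈ t
      · exact htρ hat
      · exact (Finset.subset_sdiff.mp hsub).1 (Finset.mem_sdiff.mpr ⟨ha, hat⟩)
  · rintro (⟨⟨hxT, hxρ⟩, hd⟩ | ⟨σ, ⟨hσ, hσρ⟩, hts, rfl⟩)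
    · exact ⟨Or.inl ⟨hxT, hd⟩, Finset.subset_sdiff.mpr ⟨hxρ, hd⟩⟩
    · exact ⟨Or.inr ⟨σ, hσ, hts, rfl⟩, Finset.sdiff_subset_sdiff hσρ (le_refl t)⟩

theorem reconn_adj_of_mem {G : FinGraph} {t : Finset ℕ} {x u : ℕ}
    (hx : x ∈ G.verts \ t) (hu : u ∈ G.verts \ t) (hne : x ≠ u) :
    (reconn G t).Adj x u ↔
      (G.Adj x u ∨ ((∃ a ∈ t, G.Adj x a) ∧ ∃ a ∈ t, G.Adj u a)) := by
  rw [reconn_adj]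
  tauto

/-- (c) Iterated reconnected complement along a nested tube. -/
theorem reconn_reconn {G : FinGraph} {t ρ : Finset ℕ} (hρV : ρ ⊆ G.verts)
    (hss : t ⊂ ρ) (hconn : VConn G ρ) (htne : t.Nonempty) :
    reconn (reconn G t) (ρ \ t) = reconn G ρ := by
  obtain ⟨htρ, hnsub⟩ := Finset.ssubset_def.mp hss
  obtain ⟨b0, hb0ρ, hb0t, a0, ha0t, hadj0⟩ := exists_exit hconn htρ htne hnsub
  refine FinGraph.ext' ?_ ?_
  · rw [reconn_verts, reconn_verts, reconn_verts]
    exact sdiff_sdiff_verts htρ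
  intro v w
  rw [reconn_adj (reconn G t) (ρ \ t) v w, reconn_adj G ρ v w, reconn_verts G t]
  constructor
  · rintro ⟨hne, hv, hw, hd⟩
    rw [sdiff_sdiff_verts htρ] at hv hw
    obtain ⟨hvV, hvρ⟩ := Finset.mem_sdiff.mp hv
    obtain ⟨hwV, hwρ⟩ := Finset.mem_sdiff.mp hw
    have hvt : v ∉ t := fun hc => hvρ (htρ hc)
    have hwt : w ∉ t := fun hc => hwρ (htρ hc)
    refine ⟨hne, hv, hw, ?_⟩
    rcases hd with h | ⟨⟨u, hu, h1⟩, ⟨u', hu', h2⟩⟩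
    · -- (reconn G t).Adj v w
      rcases (reconn_adj_of_mem (Finset.mem_sdiff.mpr ⟨hvV, hvt⟩)
          (Finset.mem_sdiff.mpr ⟨hwV, hwt⟩) hne).mp h with h' | ⟨⟨a, hat, h1⟩, ⟨a', hat', h2⟩⟩
      · exact Or.inl h'
      · exact Or.inr ⟨⟨a, htρ hat, h1⟩, ⟨a', htρ hat', h2⟩⟩
    · -- reconnection through ρ \ t
      obtain ⟨huρ, hut⟩ := Finset.mem_sdiff.mp hu
      obtain ⟨hu'ρ, hu't⟩ := Finset.mem_sdiff.mp hu'
      have hvu : v ≠ u := fun hc => hvρ (hc ▸ huρ)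
      have hwu : w ≠ u' := fun hc => hwρ (hc ▸ hu'ρ)
      rcases (reconn_adj_of_mem (Finset.mem_sdiff.mpr ⟨hvV, hvt⟩)
          (Finset.mem_sdiff.mpr ⟨hρV huρ, hut⟩) hvu).mp h1 with h' | ⟨⟨a, hat, h1'⟩, _⟩
      · rcases (reconn_adj_of_mem (Finset.mem_sdiff.mpr ⟨hwV, hwt⟩)
            (Finset.mem_sdiff.mpr ⟨hρV hu'ρ, hu't⟩) hwu).mp h2 with h'' | ⟨⟨a', hat', h2'⟩, _⟩
        · exact Or.inr ⟨⟨u, huρ, h'⟩, ⟨u', hu'ρ, h''⟩⟩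
        · exact Or.inr ⟨⟨u, huρ, h'⟩, ⟨a', htρ hat', h2'⟩⟩
      · rcases (reconn_adj_of_mem (Finset.mem_sdiff.mpr ⟨hwV, hwt⟩)
            (Finset.mem_sdiff.mpr ⟨hρV hu'ρ, hu't⟩) hwu).mp h2 with h'' | ⟨⟨a', hat', h2'⟩, _⟩
        · exact Or.inr ⟨⟨a, htρ hat, h1'⟩, ⟨u', hu'ρ, h''⟩⟩
        · exact Or.inr ⟨⟨a, htρ hat, h1'⟩, ⟨a', htρ hat', h2'⟩⟩
  · rintro ⟨hne, hv, hw, hd⟩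
    obtain ⟨hvV, hvρ⟩ := Finset.mem_sdiff.mp hv
    obtain ⟨hwV, hwρ⟩ := Finset.mem_sdiff.mp hw
    have hvt : v ∉ t := fun hc => hvρ (htρ hc)
    have hwt : w ∉ t := fun hc => hwρ (htρ hc)
    have hmem : ∀ x, x ∈ G.verts → x ∉ ρ → x ∈ (G.verts \ t) \ (ρ \ t) := by
      intro x h1 h2
      rw [sdiff_sdiff_verts htρ]
      exact Finset.mem_sdiff.mpr ⟨h1, h2⟩
    refine ⟨hne, hmem v hvV hvρ, hmem w hwV hwρ, ?_⟩
    -- key: from a G-neighbour of x in ρ, get a (reconn G t)-neighbour of x in ρ \ t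
    have key : ∀ x, x ∈ G.verts → x ∉ ρ → (∃ u ∈ ρ, G.Adj x u) →
        ∃ u ∈ ρ \ t, (reconn G t).Adj x u := by
      rintro x hxV hxρ ⟨u, huρ, hadj⟩
      have hxt : x ∉ t := fun hc => hxρ (htρ hc)
      by_cases hut : u ∈ t
      · -- reconnect through t to the boundary vertex b0
        refine ⟨b0, Finset.mem_sdiff.mpr ⟨hb0ρ, hb0t⟩, ?_⟩
        have hxb0 : x ≠ b0 := fun hc => hxρ (hc ▸ hb0ρ)
        exact (reconn_adj_of_mem (Finset.mem_sdiff.mpr ⟨hxV, hxt⟩)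
          (Finset.mem_sdiff.mpr ⟨hρV hb0ρ, hb0t⟩) hxb0).mpr
          (Or.inr ⟨⟨u, hut, hadj⟩, ⟨a0, ha0t, hadj0⟩⟩)
      · refine ⟨u, Finset.mem_sdiff.mpr ⟨huρ, hut⟩, ?_⟩
        have hxu : x ≠ u := fun hc => hxρ (hc ▸ huρ)
        exact (reconn_adj_of_mem (Finset.mem_sdiff.mpr ⟨hxV, hxt⟩)
          (Finset.mem_sdiff.mpr ⟨hρV huρ, hut⟩) hxu).mpr (Or.inl hadj)
    rcases hd with h | ⟨⟨u, huρ, h1⟩, ⟨u', hu'ρ, h2⟩⟩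
    · exact Or.inl ((reconn_adj_of_mem (Finset.mem_sdiff.mpr ⟨hvV, hvt⟩)
        (Finset.mem_sdiff.mpr ⟨hwV, hwt⟩) hne).mpr (Or.inl h))
    · exact Or.inr ⟨key v hvV hvρ ⟨u, huρ, h1⟩, key w hwV hwρ ⟨u', hu'ρ, h2⟩⟩


/-- (d) Iterated induced tubing along a nested tube. -/
theorem indStar_indStar {G : FinGraph} {T : Finset (Finset ℕ)} (hT : IsTubing G T)
    {t ρ : Finset ℕ} (ht : t ∈ T) (hρ : ρ ∈ T) (hss : t ⊂ ρ) :
    indStar (indStar T t) (ρ \ t) = indStar T ρ := by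
  obtain ⟨htρ', hnsρ⟩ := Finset.ssubset_def.mp hss
  obtain ⟨x0, hx0⟩ := (hT.2.1 t ht).1
  ext x
  constructor
  · intro hx
    rcases mem_indStar.mp hx with ⟨hx1, hd⟩ | ⟨s, hs1, hss', rfl⟩
    · rcases mem_indStar.mp hx1 with ⟨hxT, hdt⟩ | ⟨σ, hσ, htσ, rfl⟩
      · refine mem_indStar.mpr (Or.inl ⟨hxT, Finset.disjoint_left.mpr ?_⟩)
        intro a ha haρ
        by_cases hat : a ∈ t
        · exact Finset.disjoint_left.mp hdt ha hat
        · exact Finset.disjoint_left.mp hd ha (Finset.mem_sdiff.mpr ⟨haρ, hat⟩)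
      · exfalso
        obtain ⟨htσ', hnsσ⟩ := Finset.ssubset_def.mp htσ
        by_cases heq : σ = ρ
        · subst heq
          obtain ⟨b, hbσ, hbt⟩ := Finset.not_subset.mp hnsρ
          exact Finset.disjoint_left.mp hd (Finset.mem_sdiff.mpr ⟨hbσ, hbt⟩)
            (Finset.mem_sdiff.mpr ⟨hbσ, hbt⟩)
        · rcases hT.2.2 σ hσ ρ hρ heq with h | h | h
          · obtain ⟨b, hbσ, hbt⟩ := Finset.not_subset.mp hnsσ
            exact Finset.disjoint_left.mp hd (Finset.mem_sdiff.mpr ⟨hbσ, hbt⟩)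
              (Finset.mem_sdiff.mpr ⟨h hbσ, hbt⟩)
          · obtain ⟨b, hbρ, hbt⟩ := Finset.not_subset.mp hnsρ
            exact Finset.disjoint_left.mp hd (Finset.mem_sdiff.mpr ⟨h hbρ, hbt⟩)
              (Finset.mem_sdiff.mpr ⟨hbρ, hbt⟩)
          · exact Finset.disjoint_left.mp h.1 (htσ' hx0) (htρ' hx0)
    · rcases mem_indStar.mp hs1 with ⟨hsT, hdt⟩ | ⟨σ, hσ, htσ, rfl⟩
      · exfalso
        obtain ⟨hsub', hnsub'⟩ := Finset.ssubset_def.mp hss'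
        by_cases heq : s = ρ
        · subst heq
          exact Finset.disjoint_left.mp hdt (htρ' hx0) hx0
        · rcases hT.2.2 s hsT ρ hρ heq with h | h | h
          · exact hnsub' (fun a ha => Finset.mem_sdiff.mpr
              ⟨h ha, fun hc => Finset.disjoint_left.mp hdt ha hc⟩)
          · exact Finset.disjoint_left.mp hdt (h (htρ' hx0)) hx0
          · obtain ⟨b, hbρ, hbt⟩ := Finset.not_subset.mp hnsρ
            exact Finset.disjoint_left.mp h.1 (hsub' (Finset.mem_sdiff.mpr ⟨hbρ, hbt⟩)) hbρ
      · obtain ⟨hsub', hnsub'⟩ := Finset.ssubset_def.mp hss'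
        obtain ⟨htσ', _⟩ := Finset.ssubset_def.mp htσ
        have hρσ : ρ ⊆ σ := by
          intro a ha
          by_cases hat : a ∈ t
          · exact htσ' hat
          · exact (Finset.mem_sdiff.mp (hsub' (Finset.mem_sdiff.mpr ⟨ha, hat⟩))).1
        obtain ⟨b, hbσt, hbρt⟩ := Finset.not_subset.mp hnsub'
        obtain ⟨hbσ, hbt⟩ := Finset.mem_sdiff.mp hbσt
        have hbρ : b ∉ ρ := fun hc => hbρt (Finset.mem_sdiff.mpr ⟨hc, hbt⟩)
        refine mem_indStar.mpr (Or.inr ⟨σ, hσ,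
          Finset.ssubset_def.mpr ⟨hρσ, fun hc => hbρ (hc hbσ)⟩,
          (sdiff_sdiff_helper htρ').symm⟩)
  · intro hx
    rcases mem_indStar.mp hx with ⟨hxT, hdρ⟩ | ⟨σ, hσ, hρσ, rfl⟩
    · have hdt : Disjoint x t := Finset.disjoint_left.mpr (by
        intro a ha hat
        exact Finset.disjoint_left.mp hdρ ha (htρ' hat))
      have hd2 : Disjoint x (ρ \ t) := Finset.disjoint_left.mpr (by
        intro a ha hc
        exact Finset.disjoint_left.mp hdρ ha (Finset.mem_sdiff.mp hc).1)
      exact mem_indStar.mpr (Or.inl ⟨mem_indStar.mpr (Or.inl ⟨hxT, hdt⟩), hd2⟩)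
    · obtain ⟨hρσ', hnsub'⟩ := Finset.ssubset_def.mp hρσ
      obtain ⟨b, hbσ, hbρ⟩ := Finset.not_subset.mp hnsub'
      have hbt : b ∉ t := fun hc => hbρ (htρ' hc)
      refine mem_indStar.mpr (Or.inr ⟨σ \ t,
        mem_indStar.mpr (Or.inr ⟨σ, hσ, hss.trans hρσ, rfl⟩),
        Finset.ssubset_def.mpr ⟨Finset.sdiff_subset_sdiff hρσ' (le_refl t),
          fun hc => hbρ (Finset.mem_sdiff.mp (hc (Finset.mem_sdiff.mpr ⟨hbσ, hbt⟩))).1⟩,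
        sdiff_sdiff_helper htρ'⟩)

/-- (f1) Restriction of the reconnected complement to a far-apart tube. -/
theorem induce_reconn_far {G : FinGraph} {t ρ : Finset ℕ} (hfar : FarApart G t ρ)
    (hρV : ρ ⊆ G.verts) : induce (reconn G t) ρ = induce G ρ := by
  refine FinGraph.ext' rfl ?_
  intro v w
  show v ∈ ρ ∧ w ∈ ρ ∧ (reconn G t).Adj v w ↔ v ∈ ρ ∧ w ∈ ρ ∧ G.Adj v w
  constructor
  · rintro ⟨hv, hw, hA⟩
    rcases (reconn_adj G t v w).mp hA with ⟨hne, _, _, h | ⟨⟨u, hu, h1⟩, _⟩⟩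
    · exact ⟨hv, hw, h⟩
    · exact absurd ⟨u, hu, v, hv, G.symm _ _ h1⟩ hfar.2
  · rintro ⟨hv, hw, hA⟩
    refine ⟨hv, hw, (reconn_adj G t v w).mpr ⟨fun hc => G.loopless w (hc ▸ hA),
      Finset.mem_sdiff.mpr ⟨hρV hv, fun hc => Finset.disjoint_left.mp hfar.1 hc hv⟩,
      Finset.mem_sdiff.mpr ⟨hρV hw, fun hc => Finset.disjoint_left.mp hfar.1 hc hw⟩,
      Or.inl hA⟩⟩

/-- (f2) Restriction of the induced tubing to a far-apart tube. -/
theorem restrictT_indStar_far {G : FinGraph} {T : Finset (Finset ℕ)} (hT : IsTubing G T)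
    {t ρ : Finset ℕ} (ht : t ∈ T) (hρ : ρ ∈ T) (hfar : FarApart G t ρ) :
    restrictT (indStar T t) ρ = restrictT T ρ := by
  obtain ⟨x0, hx0⟩ := (hT.2.1 t ht).1
  obtain ⟨y0, hy0⟩ := (hT.2.1 ρ hρ).1
  ext x
  simp only [mem_restrictT, mem_indStar]
  constructor
  · rintro ⟨(⟨hxT, _⟩ | ⟨σ, hσ, htσ, rfl⟩), hsub⟩
    · exact ⟨hxT, hsub⟩
    · exfalso
      obtain ⟨htσ', hnsσ⟩ := Finset.ssubset_def.mp htσ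
      by_cases heq : σ = ρ
      · subst heq
        exact Finset.disjoint_left.mp hfar.1 hx0 (htσ' hx0)
      · rcases hT.2.2 σ hσ ρ hρ heq with h | h | h
        · exact Finset.disjoint_left.mp hfar.1 hx0 (h (htσ' hx0))
        · -- ρ ⊆ σ together with σ \ t ⊆ ρ gives σ = t ∪ ρ
          refine tube_not_union hT hfar ⟨x0, hx0⟩ ⟨y0, hy0⟩ hσ ?_
          apply Finset.Subset.antisymm
          · intro a ha
            by_cases hat : a ∈ t
            · exact Finset.mem_union_left _ hat
            · exact Finset.mem_union_right _ (hsub (Finset.mem_sdiff.mpr ⟨ha, hat⟩))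
          · intro a ha
            rcases Finset.mem_union.mp ha with h' | h'
            · exact htσ' h'
            · exact h h'
        · obtain ⟨b, hbσ, hbt⟩ := Finset.not_subset.mp hnsσ
          exact Finset.disjoint_left.mp h.1 hbσ (hsub (Finset.mem_sdiff.mpr ⟨hbσ, hbt⟩))
  · rintro ⟨hxT, hsub⟩
    refine ⟨Or.inl ⟨hxT, Finset.disjoint_left.mpr ?_⟩, hsub⟩
    intro a ha hat
    exact Finset.disjoint_left.mp hfar.1 hat (hsub ha)

theorem reconn_far_adj {G : FinGraph} {t ρ : Finset ℕ} (hfar : FarApart G t ρ)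
    (htV : t ⊆ G.verts) (hρV : ρ ⊆ G.verts) (v w : ℕ) :
    (reconn (reconn G t) ρ).Adj v w ↔
      v ≠ w ∧ (v ∈ G.verts ∧ v ∉ t ∧ v ∉ ρ) ∧ (w ∈ G.verts ∧ w ∉ t ∧ w ∉ ρ) ∧
        (G.Adj v w ∨ ((∃ a ∈ t, G.Adj v a) ∧ ∃ a ∈ t, G.Adj w a)
          ∨ ((∃ a ∈ ρ, G.Adj v a) ∧ ∃ a ∈ ρ, G.Adj w a)) := by
  rw [reconn_adj, reconn_verts]
  have hmem : ∀ x, x ∈ (G.verts \ t) \ ρ ↔ x ∈ G.verts ∧ x ∉ t ∧ x ∉ ρ := by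
    intro x; simp only [Finset.mem_sdiff]; tauto
  have hN : ∀ x, x ∈ G.verts → x ∉ t → x ∉ ρ →
      ((∃ u ∈ ρ, (reconn G t).Adj x u) ↔ ∃ u ∈ ρ, G.Adj x u) := by
    intro x hxV hxt hxρ
    constructor
    · rintro ⟨u, huρ, hA⟩
      rcases (reconn_adj G t x u).mp hA with ⟨_, _, _, h | ⟨_, ⟨a, hat, h2⟩⟩⟩
      · exact ⟨u, huρ, h⟩
      · exact absurd ⟨a, hat, u, huρ, G.symm _ _ h2⟩ hfar.2
    · rintro ⟨u, huρ, hA⟩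
      have hut : u ∉ t := fun hc => Finset.disjoint_left.mp hfar.1 hc huρ
      refine ⟨u, huρ, (reconn_adj G t x u).mpr ⟨fun hc => hxρ (hc ▸ huρ),
        Finset.mem_sdiff.mpr ⟨hxV, hxt⟩, Finset.mem_sdiff.mpr ⟨hρV huρ, hut⟩, Or.inl hA⟩⟩
  constructor
  · rintro ⟨hne, hv, hw, hd⟩
    obtain ⟨hvV, hvt, hvρ⟩ := (hmem v).mp hv
    obtain ⟨hwV, hwt, hwρ⟩ := (hmem w).mp hw
    refine ⟨hne, ⟨hvV, hvt, hvρ⟩, ⟨hwV, hwt, hwρ⟩, ?_⟩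
    rcases hd with h | ⟨h1, h2⟩
    · rcases (reconn_adj_of_mem (Finset.mem_sdiff.mpr ⟨hvV, hvt⟩)
          (Finset.mem_sdiff.mpr ⟨hwV, hwt⟩) hne).mp h with h' | h'
      · exact Or.inl h'
      · exact Or.inr (Or.inl h')
    · exact Or.inr (Or.inr ⟨(hN v hvV hvt hvρ).mp h1, (hN w hwV hwt hwρ).mp h2⟩)
  · rintro ⟨hne, ⟨hvV, hvt, hvρ⟩, ⟨hwV, hwt, hwρ⟩, hd⟩
    refine ⟨hne, (hmem v).mpr ⟨hvV, hvt, hvρ⟩, (hmem w).mpr ⟨hwV, hwt, hwρ⟩, ?_⟩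
    rcases hd with h | h | h
    · exact Or.inl ((reconn_adj_of_mem (Finset.mem_sdiff.mpr ⟨hvV, hvt⟩)
        (Finset.mem_sdiff.mpr ⟨hwV, hwt⟩) hne).mpr (Or.inl h))
    · exact Or.inl ((reconn_adj_of_mem (Finset.mem_sdiff.mpr ⟨hvV, hvt⟩)
        (Finset.mem_sdiff.mpr ⟨hwV, hwt⟩) hne).mpr (Or.inr h))
    · exact Or.inr ⟨(hN v hvV hvt hvρ).mpr h.1, (hN w hwV hwt hwρ).mpr h.2⟩

/-- (f3) The double reconnected complement is symmetric for far-apart tubes. -/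
theorem reconn_reconn_far {G : FinGraph} {t ρ : Finset ℕ} (hfar : FarApart G t ρ)
    (htV : t ⊆ G.verts) (hρV : ρ ⊆ G.verts) :
    reconn (reconn G t) ρ = reconn (reconn G ρ) t := by
  refine FinGraph.ext' ?_ ?_
  · rw [reconn_verts, reconn_verts, reconn_verts, reconn_verts]
    exact sdiff_sdiff_comm
  · intro v w
    rw [reconn_far_adj hfar htV hρV, reconn_far_adj (farApart_symm hfar) hρV htV]
    constructor
    · rintro ⟨hne, ⟨h1, h2, h3⟩, ⟨h4, h5, h6⟩, hd⟩
      refine ⟨hne, ⟨h1, h3, h2⟩, ⟨h4, h6, h5⟩, ?_⟩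
      rcases hd with h | h | h
      · exact Or.inl h
      · exact Or.inr (Or.inr h)
      · exact Or.inr (Or.inl h)
    · rintro ⟨hne, ⟨h1, h2, h3⟩, ⟨h4, h5, h6⟩, hd⟩
      refine ⟨hne, ⟨h1, h3, h2⟩, ⟨h4, h6, h5⟩, ?_⟩
      rcases hd with h | h | h
      · exact Or.inl h
      · exact Or.inr (Or.inr h)
      · exact Or.inr (Or.inl h)

/-- One inclusion for (f4). -/
theorem indStar_far_subset {G : FinGraph} {T : Finset (Finset ℕ)} (hT : IsTubing G T)
    {t ρ : Finset ℕ} (ht : t ∈ T) (hρ : ρ ∈ T) (hfar : FarApart G t ρ) :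
    indStar (indStar T t) ρ ⊆ indStar (indStar T ρ) t := by
  intro x hx
  rcases mem_indStar.mp hx with ⟨hx1, hdρ⟩ | ⟨s, hs1, hρs, rfl⟩
  · rcases mem_indStar.mp hx1 with ⟨hxT, hdt⟩ | ⟨σ, hσ, htσ, rfl⟩
    · exact mem_indStar.mpr (Or.inl ⟨mem_indStar.mpr (Or.inl ⟨hxT, hdρ⟩), hdt⟩)
    · have hdσρ : Disjoint σ ρ := Finset.disjoint_left.mpr (by
        intro a haσ haρ
        by_cases hat : a ∈ t
        · exact Finset.disjoint_left.mp hfar.1 hat haρ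
        · exact Finset.disjoint_left.mp hdρ (Finset.mem_sdiff.mpr ⟨haσ, hat⟩) haρ)
      exact mem_indStar.mpr (Or.inr ⟨σ, mem_indStar.mpr (Or.inl ⟨hσ, hdσρ⟩), htσ, rfl⟩)
  · rcases mem_indStar.mp hs1 with ⟨hsT, hdt⟩ | ⟨σ, hσ, htσ, rfl⟩
    · exact mem_indStar.mpr (Or.inl ⟨mem_indStar.mpr (Or.inr ⟨s, hsT, hρs, rfl⟩),
        Finset.disjoint_left.mpr (by
          intro a ha hat
          exact Finset.disjoint_left.mp hdt (Finset.mem_sdiff.mp ha).1 hat)⟩)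
    · obtain ⟨hρs', hnsub'⟩ := Finset.ssubset_def.mp hρs
      obtain ⟨b, hbσt, hbρ⟩ := Finset.not_subset.mp hnsub'
      obtain ⟨hbσ, hbt⟩ := Finset.mem_sdiff.mp hbσt
      obtain ⟨htσ', _⟩ := Finset.ssubset_def.mp htσ
      have hρσ : ρ ⊆ σ := fun a ha => (Finset.mem_sdiff.mp (hρs' ha)).1
      have htσρ : t ⊆ σ \ ρ := fun a ha => Finset.mem_sdiff.mpr
        ⟨htσ' ha, fun hc => Finset.disjoint_left.mp hfar.1 ha hc⟩
      refine mem_indStar.mpr (Or.inr ⟨σ \ ρ,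
        mem_indStar.mpr (Or.inr ⟨σ, hσ,
          Finset.ssubset_def.mpr ⟨hρσ, fun hc => hbρ (hc hbσ)⟩, rfl⟩),
        Finset.ssubset_def.mpr ⟨htσρ,
          fun hc => hbt (hc (Finset.mem_sdiff.mpr ⟨hbσ, hbρ⟩))⟩,
        sdiff_sdiff_comm⟩)

/-- (f4) The double induced tubing is symmetric for far-apart tubes. -/
theorem indStar_indStar_far {G : FinGraph} {T : Finset (Finset ℕ)} (hT : IsTubing G T)
    {t ρ : Finset ℕ} (ht : t ∈ T) (hρ : ρ ∈ T) (hfar : FarApart G t ρ) :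
    indStar (indStar T t) ρ = indStar (indStar T ρ) t :=
  Finset.Subset.antisymm (indStar_far_subset hT ht hρ hfar)
    (indStar_far_subset hT hρ ht (farApart_symm hfar))


section Assembly

variable (K : Type) [CommRing K] (G : FinGraph) (T : Finset (Finset ℕ))

def Af (t : Finset ℕ) : TubIdx →₀ K :=
  Finsupp.single (embPair (induce G t) (restrictT T t)) 1
def Bf (t : Finset ℕ) : TubIdx →₀ K :=
  Finsupp.single (embPair (reconn G t) (indStar T t)) 1
def Rf (σ t : Finset ℕ) : TubIdx →₀ K :=
  Finsupp.single (embPair (reconn (induce G t) σ) (indStar (restrictT T t) σ)) 1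
def Cf (t σ : Finset ℕ) : TubIdx →₀ K :=
  Finsupp.single (embPair (reconn (reconn G t) σ) (indStar (indStar T t) σ)) 1
def Nf : TubIdx →₀ K := Finsupp.single none 1

theorem sdiff_inj {t σ σ' : Finset ℕ} (h1 : t ⊆ σ) (h2 : t ⊆ σ')
    (h : σ \ t = σ' \ t) : σ = σ' := by
  ext a
  constructor
  · intro ha
    by_cases hat : a ∈ t
    · exact h2 hat
    · exact (Finset.mem_sdiff.mp (h ▸ Finset.mem_sdiff.mpr ⟨ha, hat⟩)).1
  · intro ha
    by_cases hat : a ∈ t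
    · exact h1 hat
    · exact (Finset.mem_sdiff.mp (h ▸ Finset.mem_sdiff.mpr ⟨ha, hat⟩)).1

theorem union_of_sdiff_eq {t σ x : Finset ℕ} (h1 : t ⊆ σ) (h : σ \ t = x) :
    σ = x ∪ t := by
  subst h
  ext a
  simp only [Finset.mem_union, Finset.mem_sdiff]
  constructor
  · intro ha
    by_cases hat : a ∈ t
    · exact Or.inr hat
    · exact Or.inl ⟨ha, hat⟩
  · rintro (⟨ha, _⟩ | ha)
    · exact ha
    · exact h1 ha

theorem sum_indStar {M : Type} [AddCommMonoid M] (T : Finset (Finset ℕ)) (t : Finset ℕ)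
    (f : Finset ℕ → M)
    (hdisj : Disjoint (T.filter (fun σ => Disjoint σ t))
      ((T.filter (fun ρ => t ⊂ ρ)).image (fun ρ => ρ \ t)))
    (hinj : ∀ ρ ∈ T.filter (fun ρ => t ⊂ ρ), ∀ ρ' ∈ T.filter (fun ρ => t ⊂ ρ),
      ρ \ t = ρ' \ t → ρ = ρ') :
    ∑ s ∈ indStar T t, f s = (∑ σ ∈ T.filter (fun σ => Disjoint σ t), f σ)
      + ∑ ρ ∈ T.filter (fun ρ => t ⊂ ρ), f (ρ \ t) := by
  rw [show indStar T t = T.filter (fun σ => Disjoint σ t) ∪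
    (T.filter (fun ρ => t ⊂ ρ)).image (fun ρ => ρ \ t) from rfl]
  rw [Finset.sum_union hdisj, Finset.sum_image hinj]

/-- Expansion of `Δ` on the second tensor factor `B_t`, for a proper tube `t`. -/
theorem delta_Bf (hT : IsTubing G T) {t : Finset ℕ} (ht : t ∈ T) (htV : t ≠ G.verts) :
    delta K (Bf K G T t) =
      ((∑ σ ∈ T.filter (fun σ => Disjoint σ t), Af K G T σ ⊗ₜ[K] Cf K G T t σ)
        + ∑ ρ ∈ T.filter (fun ρ => t ⊂ ρ), Rf K G T t ρ ⊗ₜ[K] Bf K G T ρ)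
      + Nf K ⊗ₜ[K] Bf K G T t := by
  have hsub : ∀ s ∈ T, s ⊆ G.verts := fun s hs => (hT.2.1 s hs).2.1
  have htV' : t ⊆ G.verts := hsub t ht
  have hne : (reconn G t).verts.Nonempty := by
    rw [reconn_verts]
    rcases Finset.not_subset.mp (fun hc => htV (Finset.Subset.antisymm htV' hc)) with ⟨x, hx1, hx2⟩
    exact ⟨x, Finset.mem_sdiff.mpr ⟨hx1, hx2⟩⟩
  rw [Bf, delta_single, deltaFun_embPair K _ _ hne
    (by rw [reconn_verts]; exact indStar_subset hsub)]
  congr 1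
  have hdisj : Disjoint (T.filter (fun σ => Disjoint σ t))
      ((T.filter (fun ρ => t ⊂ ρ)).image (fun ρ => ρ \ t)) := by
    rw [Finset.disjoint_left]
    intro x hx1 hx2
    obtain ⟨hxT, hxd⟩ := Finset.mem_filter.mp hx1
    obtain ⟨ρ, hρ, hρx⟩ := Finset.mem_image.mp hx2
    obtain ⟨hρT, htρ⟩ := Finset.mem_filter.mp hρ
    exact tube_not_union hT (tubing_far hT hxT ht hxd) (hT.2.1 x hxT).1 (hT.2.1 t ht).1
      hρT ((union_of_sdiff_eq (Finset.ssubset_def.mp htρ).1 hρx).symm ▸ rfl)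
  rw [sum_indStar T t _ hdisj (by
    intro ρ hρ ρ' hρ' h
    exact sdiff_inj (Finset.ssubset_def.mp (Finset.mem_filter.mp hρ).2).1
      (Finset.ssubset_def.mp (Finset.mem_filter.mp hρ').2).1 h)]
  congr 1
  · refine Finset.sum_congr rfl ?_
    intro σ hσ
    obtain ⟨hσT, hσd⟩ := Finset.mem_filter.mp hσ
    have hfar : FarApart G t σ := farApart_symm (tubing_far hT hσT ht hσd)
    rw [induce_reconn_far hfar (hsub σ hσT), restrictT_indStar_far hT ht hσT hfar]
    rfl
  · refine Finset.sum_congr rfl ?_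
    intro ρ hρ
    obtain ⟨hρT, htρ⟩ := Finset.mem_filter.mp hρ
    rw [induce_reconn (Finset.ssubset_def.mp htρ).1 (hsub ρ hρT),
      restrictT_indStar (Finset.ssubset_def.mp htρ).1,
      reconn_reconn (hsub ρ hρT) htρ (hT.2.1 ρ hρT).2.2 (hT.2.1 t ht).1,
      indStar_indStar hT ht hρT htρ]
    rfl

theorem Bf_univ : Bf K G T G.verts = Nf K := by
  rw [Bf, embPair_of_empty (by rw [reconn_verts]; exact Finset.sdiff_self _)]
  rfl

theorem delta_Nf : delta K (Nf K) = Nf K ⊗ₜ[K] Nf K := by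
  rw [Nf, delta_single]; rfl

/-- Expansion of `Δ` on the first tensor factor `A_t`. -/
theorem delta_Af (hT : IsTubing G T) {t : Finset ℕ} (ht : t ∈ T) :
    delta K (Af K G T t) =
      ((∑ σ ∈ (restrictT T t).erase t, Af K G T σ ⊗ₜ[K] Rf K G T σ t)
        + Af K G T t ⊗ₜ[K] Nf K)
      + Nf K ⊗ₜ[K] Af K G T t := by
  have hne : (induce G t).verts.Nonempty := (hT.2.1 t ht).1
  rw [Af, delta_single, deltaFun_embPair K (induce G t) (restrictT T t) hne
    (fun s hs => (mem_restrictT.mp hs).2)]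
  congr 1
  have htmem : t ∈ restrictT T t := mem_restrictT.mpr ⟨ht, Finset.Subset.refl t⟩
  rw [← Finset.add_sum_erase _ _ htmem]
  rw [add_comm]
  congr 1
  · refine Finset.sum_congr rfl ?_
    intro σ hσ
    have hσt : σ ⊆ t := (mem_restrictT.mp (Finset.mem_of_mem_erase hσ)).2
    rw [induce_induce G hσt, restrictT_restrictT T hσt]
    rfl
  · have : (reconn (induce G t) t).verts = ∅ := by
      rw [reconn_verts]; exact Finset.sdiff_self _
    rw [induce_induce G (Finset.Subset.refl t), restrictT_restrictT T (Finset.Subset.refl t),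
      embPair_of_empty this]
    rfl

theorem restrict_erase_eq {t : Finset ℕ} :
    (restrictT T t).erase t = T.filter (fun σ => σ ⊂ t) := by
  ext x
  simp only [Finset.mem_erase, mem_restrictT, Finset.mem_filter]
  constructor
  · rintro ⟨hne, hxT, hsub⟩
    exact ⟨hxT, Finset.ssubset_iff_subset_ne.mpr ⟨hsub, hne⟩⟩
  · rintro ⟨hxT, hss⟩
    obtain ⟨h1, h2⟩ := Finset.ssubset_iff_subset_ne.mp hss
    exact ⟨h2, hxT, h1⟩

theorem filter_disj_univ (hT : IsTubing G T) :
    T.filter (fun σ => Disjoint σ G.verts) = ∅ := by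
  rw [Finset.filter_eq_empty_iff]
  intro σ hσ hd
  obtain ⟨x, hx⟩ := (hT.2.1 σ hσ).1
  exact Finset.disjoint_left.mp hd hx ((hT.2.1 σ hσ).2.1 hx)

theorem filter_ssup_univ (hT : IsTubing G T) :
    T.filter (fun σ => G.verts ⊂ σ) = ∅ := by
  rw [Finset.filter_eq_empty_iff]
  intro σ hσ hss
  obtain ⟨b, hb1, hb2⟩ := Finset.not_subset.mp (Finset.ssubset_def.mp hss).2
  exact hb2 ((hT.2.1 σ hσ).2.1 hb1)

theorem rk_Icc {n v : ℕ} (hv : v ∈ Finset.Icc 1 n) : rk (Finset.Icc 1 n) v = v := by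
  obtain ⟨h1, h2⟩ := Finset.mem_Icc.mp hv
  unfold rk
  rw [show (Finset.Icc 1 n).filter (fun u => u ≤ v) = Finset.Icc 1 v by
    ext a
    simp only [Finset.mem_filter, Finset.mem_Icc]
    omega]
  rw [Nat.card_Icc]
  omega

theorem embPair_std {n : ℕ} (hV : G.verts = Finset.Icc 1 n) (hT : IsTubing G T)
    (hne : G.verts.Nonempty) : embPair G T = some (G, T) := by
  have hsub : ∀ s ∈ T, s ⊆ G.verts := fun s hs => (hT.2.1 s hs).2.1
  have hrk : ∀ v ∈ G.verts, rk G.verts v = v := by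
    intro v hv
    rw [hV] at hv ⊢
    exact rk_Icc hv
  unfold embPair
  rw [if_neg hne.ne_empty]
  congr 1
  refine Prod.ext ?_ ?_
  · refine FinGraph.ext' ?_ ?_
    · show G.verts.image (rk G.verts) = G.verts
      rw [Finset.image_congr (fun v hv => hrk v hv), Finset.image_id']
    · intro i j
      show (i ≠ j ∧ ∃ v w, G.Adj v w ∧ i = rk G.verts v ∧ j = rk G.verts w) ↔ G.Adj i j
      constructor
      · rintro ⟨hne', v, w, h, rfl, rfl⟩
        obtain ⟨hvV, hwV⟩ := G.support v w h
        rwa [hrk v hvV, hrk w hwV]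
      · intro h
        obtain ⟨hiV, hjV⟩ := G.support i j h
        exact ⟨fun hc => G.loopless j (hc ▸ h), i, j, h, (hrk i hiV).symm, (hrk j hjV).symm⟩
  · show T.image (relabelF G.verts) = T
    rw [Finset.image_congr (fun t ht => ?_), Finset.image_id']
    show relabelF G.verts t = t
    unfold relabelF
    rw [Finset.image_congr (fun v hv => hrk v (hsub t ht hv)), Finset.image_id']

theorem Af_univ {n : ℕ} (hV : G.verts = Finset.Icc 1 n) (hT : IsTubing G T)
    (hne : G.verts.Nonempty) :
    Af K G T G.verts = Finsupp.single (some (G, T)) 1 := by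
  rw [Af, induce_univ, restrictT_univ (fun s hs => (hT.2.1 s hs).2.1),
    embPair_std G T hV hT hne]

theorem delta_X {n : ℕ} (hV : G.verts = Finset.Icc 1 n) (hT : IsTubing G T)
    (hne : G.verts.Nonempty) :
    delta K (Finsupp.single (some (G, T)) 1) =
      (∑ t ∈ T, Af K G T t ⊗ₜ[K] Bf K G T t)
        + Nf K ⊗ₜ[K] Finsupp.single (some (G, T)) 1 := by
  rw [delta_single, ← embPair_std G T hV hT hne,
    deltaFun_embPair K G T hne (fun s hs => (hT.2.1 s hs).2.1)]
  rfl

end Assembly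

end CDTub

set_option maxHeartbeats 1000000 in
set_option synthInstance.maxHeartbeats 400000 in
open CDTub in
/-- The coproduct `Δ_•` is right pre-Lie: on every basis element `(Γ,T)` of `Tub`,
`(Id ⊗ Δ_• − Δ_• ⊗ Id) ∘ Δ_•` is symmetric in the first two tensor factors (the
associator and the twist `τ` are the canonical ones; the difference `a − b` is written
`a + (−1)•b`). -/
theorem delta_preLie (K : Type) [Field K] (G : FinGraph) (n : ℕ)
    (hV : G.verts = Finset.Icc 1 n) (hc : IsConnGraph G)
    (T : Finset (Finset ℕ)) (hT : IsTubing G T) :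
    LinearMap.lTensor (TubIdx →₀ K) (delta K)
        (delta K (Finsupp.single (some (G, T)) 1)) +
      (-1 : K) • (TensorProduct.assoc K (TubIdx →₀ K) (TubIdx →₀ K) (TubIdx →₀ K))
        (LinearMap.rTensor (TubIdx →₀ K) (delta K)
          (delta K (Finsupp.single (some (G, T)) 1))) =
    ((TensorProduct.assoc K (TubIdx →₀ K) (TubIdx →₀ K) (TubIdx →₀ K)).toLinearMap ∘ₗ
        LinearMap.rTensor (TubIdx →₀ K)
          (TensorProduct.comm K (TubIdx →₀ K) (TubIdx →₀ K)).toLinearMap ∘ₗ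
        (TensorProduct.assoc K (TubIdx →₀ K) (TubIdx →₀ K) (TubIdx →₀ K)).symm.toLinearMap)
      (LinearMap.lTensor (TubIdx →₀ K) (delta K)
          (delta K (Finsupp.single (some (G, T)) 1)) +
        (-1 : K) • (TensorProduct.assoc K (TubIdx →₀ K) (TubIdx →₀ K) (TubIdx →₀ K))
          (LinearMap.rTensor (TubIdx →₀ K) (delta K)
            (delta K (Finsupp.single (some (G, T)) 1)))) := by
  classical
  have hne : G.verts.Nonempty := hc.1
  have hVT : G.verts ∈ T := hT.1
  set X : TubIdx →₀ K := Finsupp.single (some (G, T)) 1 with hX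
  have hdX : delta K X = (∑ t ∈ T, Af K G T t ⊗ₜ[K] Bf K G T t) + Nf K ⊗ₜ[K] X :=
    delta_X K G T hV hT hne
  -- Expansion of (Id ⊗ Δ) Δ X
  have hE1 : LinearMap.lTensor (TubIdx →₀ K) (delta K) (delta K X) =
      (∑ t ∈ T.erase G.verts, ∑ σ ∈ T.filter (fun σ => Disjoint σ t),
        Af K G T t ⊗ₜ[K] (Af K G T σ ⊗ₜ[K] Cf K G T t σ))
      + ((∑ t ∈ T.erase G.verts, ∑ ρ ∈ T.filter (fun ρ => t ⊂ ρ),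
        Af K G T t ⊗ₜ[K] (Rf K G T t ρ ⊗ₜ[K] Bf K G T ρ))
      + ((∑ t ∈ T.erase G.verts, Af K G T t ⊗ₜ[K] (Nf K ⊗ₜ[K] Bf K G T t))
      + (X ⊗ₜ[K] (Nf K ⊗ₜ[K] Nf K)
      + ((∑ t ∈ T, Nf K ⊗ₜ[K] (Af K G T t ⊗ₜ[K] Bf K G T t))
      + Nf K ⊗ₜ[K] (Nf K ⊗ₜ[K] X))))) := by
    have hers : ∑ t ∈ T.erase G.verts,
        LinearMap.lTensor (TubIdx →₀ K) (delta K) (Af K G T t ⊗ₜ[K] Bf K G T t)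
        = ∑ t ∈ T.erase G.verts,
          ((∑ σ ∈ T.filter (fun σ => Disjoint σ t),
            Af K G T t ⊗ₜ[K] (Af K G T σ ⊗ₜ[K] Cf K G T t σ))
          + ((∑ ρ ∈ T.filter (fun ρ => t ⊂ ρ),
            Af K G T t ⊗ₜ[K] (Rf K G T t ρ ⊗ₜ[K] Bf K G T ρ))
          + Af K G T t ⊗ₜ[K] (Nf K ⊗ₜ[K] Bf K G T t))) := by
      refine Finset.sum_congr rfl ?_
      intro t ht'
      obtain ⟨htV, htT⟩ := Finset.mem_erase.mp ht'
      rw [LinearMap.lTensor_tmul, delta_Bf K G T hT htT htV,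
        TensorProduct.tmul_add, TensorProduct.tmul_add,
        TensorProduct.tmul_sum, TensorProduct.tmul_sum, add_assoc]
    rw [hdX, map_add, map_sum, ← Finset.add_sum_erase T _ hVT,
      LinearMap.lTensor_tmul, Bf_univ, delta_Nf, Af_univ K G T hV hT hne,
      LinearMap.lTensor_tmul, hdX, TensorProduct.tmul_add, TensorProduct.tmul_sum,
      hers, Finset.sum_add_distrib, Finset.sum_add_distrib]
    rw [← hX]
    abel
  -- Expansion of assoc ((Δ ⊗ Id) Δ X)
  have hE2 : (TensorProduct.assoc K (TubIdx →₀ K) (TubIdx →₀ K) (TubIdx →₀ K))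
      (LinearMap.rTensor (TubIdx →₀ K) (delta K) (delta K X)) =
      (∑ t ∈ T, ∑ σ ∈ T.filter (fun σ => σ ⊂ t),
        Af K G T σ ⊗ₜ[K] (Rf K G T σ t ⊗ₜ[K] Bf K G T t))
      + ((∑ t ∈ T.erase G.verts, Af K G T t ⊗ₜ[K] (Nf K ⊗ₜ[K] Bf K G T t))
      + (X ⊗ₜ[K] (Nf K ⊗ₜ[K] Nf K)
      + ((∑ t ∈ T, Nf K ⊗ₜ[K] (Af K G T t ⊗ₜ[K] Bf K G T t))
      + Nf K ⊗ₜ[K] (Nf K ⊗ₜ[K] X)))) := by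
    have hers : ∑ t ∈ T, (TensorProduct.assoc K (TubIdx →₀ K) (TubIdx →₀ K) (TubIdx →₀ K))
        (LinearMap.rTensor (TubIdx →₀ K) (delta K) (Af K G T t ⊗ₜ[K] Bf K G T t))
        = ∑ t ∈ T, ((∑ σ ∈ T.filter (fun σ => σ ⊂ t),
            Af K G T σ ⊗ₜ[K] (Rf K G T σ t ⊗ₜ[K] Bf K G T t))
          + (Af K G T t ⊗ₜ[K] (Nf K ⊗ₜ[K] Bf K G T t)
          + Nf K ⊗ₜ[K] (Af K G T t ⊗ₜ[K] Bf K G T t))) := by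
      refine Finset.sum_congr rfl ?_
      intro t htT
      rw [LinearMap.rTensor_tmul, delta_Af K G T hT htT, restrict_erase_eq T,
        TensorProduct.add_tmul, TensorProduct.add_tmul, TensorProduct.sum_tmul,
        map_add, map_add, map_sum, TensorProduct.assoc_tmul, TensorProduct.assoc_tmul]
      rw [show (∑ σ ∈ T.filter (fun σ => σ ⊂ t),
          (TensorProduct.assoc K (TubIdx →₀ K) (TubIdx →₀ K) (TubIdx →₀ K))
            ((Af K G T σ ⊗ₜ[K] Rf K G T σ t) ⊗ₜ[K] Bf K G T t))
        = ∑ σ ∈ T.filter (fun σ => σ ⊂ t),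
          Af K G T σ ⊗ₜ[K] (Rf K G T σ t ⊗ₜ[K] Bf K G T t) from
        Finset.sum_congr rfl (fun σ _ => TensorProduct.assoc_tmul _ _ _), add_assoc]
    rw [hdX, map_add, map_sum, map_add, map_sum, hers,
      LinearMap.rTensor_tmul, delta_Nf, TensorProduct.assoc_tmul,
      Finset.sum_add_distrib, Finset.sum_add_distrib,
      ← Finset.add_sum_erase T (fun t => Af K G T t ⊗ₜ[K] (Nf K ⊗ₜ[K] Bf K G T t)) hVT,
      Bf_univ, Af_univ K G T hV hT hne, ← hX]
    abel
  -- the two nested double sums agree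
  have hnest : (∑ t ∈ T.erase G.verts, ∑ ρ ∈ T.filter (fun ρ => t ⊂ ρ),
        Af K G T t ⊗ₜ[K] (Rf K G T t ρ ⊗ₜ[K] Bf K G T ρ))
      = ∑ t ∈ T, ∑ σ ∈ T.filter (fun σ => σ ⊂ t),
        Af K G T σ ⊗ₜ[K] (Rf K G T σ t ⊗ₜ[K] Bf K G T t) := by
    rw [Finset.sum_erase T (by rw [filter_ssup_univ G T hT, Finset.sum_empty])]
    simp only [Finset.sum_filter]
    exact Finset.sum_comm
  -- the difference is the far-apart double sum
  have hkey : LinearMap.lTensor (TubIdx →₀ K) (delta K) (delta K X) +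
      (-1 : K) • (TensorProduct.assoc K (TubIdx →₀ K) (TubIdx →₀ K) (TubIdx →₀ K))
        (LinearMap.rTensor (TubIdx →₀ K) (delta K) (delta K X)) =
      ∑ t ∈ T.erase G.verts, ∑ σ ∈ T.filter (fun σ => Disjoint σ t),
        Af K G T t ⊗ₜ[K] (Af K G T σ ⊗ₜ[K] Cf K G T t σ) := by
    rw [hE1, hE2, ← hnest]
    module
  rw [hkey]
  -- apply the twist to the far-apart double sum
  rw [map_sum]
  have hM : ∀ t ∈ T.erase G.verts,
      ((TensorProduct.assoc K (TubIdx →₀ K) (TubIdx →₀ K) (TubIdx →₀ K)).toLinearMap ∘ₗ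
        LinearMap.rTensor (TubIdx →₀ K)
          (TensorProduct.comm K (TubIdx →₀ K) (TubIdx →₀ K)).toLinearMap ∘ₗ
        (TensorProduct.assoc K (TubIdx →₀ K) (TubIdx →₀ K) (TubIdx →₀ K)).symm.toLinearMap)
      (∑ σ ∈ T.filter (fun σ => Disjoint σ t),
        Af K G T t ⊗ₜ[K] (Af K G T σ ⊗ₜ[K] Cf K G T t σ)) =
      ∑ σ ∈ T.filter (fun σ => Disjoint σ t),
        Af K G T σ ⊗ₜ[K] (Af K G T t ⊗ₜ[K] Cf K G T t σ) := by
    intro t _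
    rw [map_sum]
    refine Finset.sum_congr rfl ?_
    intro σ _
    simp only [LinearMap.comp_apply, LinearEquiv.coe_coe, TensorProduct.assoc_symm_tmul,
      LinearMap.rTensor_tmul, TensorProduct.comm_tmul, TensorProduct.assoc_tmul]
  rw [Finset.sum_congr rfl hM]
  -- symmetry of the far-apart sum
  calc ∑ t ∈ T.erase G.verts, ∑ σ ∈ T.filter (fun σ => Disjoint σ t),
        Af K G T t ⊗ₜ[K] (Af K G T σ ⊗ₜ[K] Cf K G T t σ)
      = ∑ t ∈ T, ∑ σ ∈ T, if Disjoint σ t then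
          Af K G T t ⊗ₜ[K] (Af K G T σ ⊗ₜ[K] Cf K G T t σ) else 0 := by
        rw [Finset.sum_erase T (by rw [filter_disj_univ G T hT, Finset.sum_empty])]
        simp only [Finset.sum_filter]
    _ = ∑ t ∈ T, ∑ σ ∈ T, if Disjoint t σ then
          Af K G T σ ⊗ₜ[K] (Af K G T t ⊗ₜ[K] Cf K G T σ t) else 0 := Finset.sum_comm
    _ = ∑ t ∈ T, ∑ σ ∈ T, if Disjoint σ t then
          Af K G T σ ⊗ₜ[K] (Af K G T t ⊗ₜ[K] Cf K G T t σ) else 0 := by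
        refine Finset.sum_congr rfl ?_
        intro t htT
        refine Finset.sum_congr rfl ?_
        intro σ hσT
        by_cases hd : Disjoint σ t
        · rw [if_pos hd, if_pos hd.symm]
          have hfar : FarApart G t σ := tubing_far hT htT hσT hd.symm
          rw [show Cf K G T σ t = Cf K G T t σ by
            rw [Cf, Cf, ← reconn_reconn_far hfar (hT.2.1 t htT).2.1 (hT.2.1 σ hσT).2.1,
              ← indStar_indStar_far hT htT hσT hfar]]
        · rw [if_neg hd, if_neg (fun hc => hd hc.symm)]
    _ = ∑ t ∈ T.erase G.verts, ∑ σ ∈ T.filter (fun σ => Disjoint σ t),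
          Af K G T σ ⊗ₜ[K] (Af K G T t ⊗ₜ[K] Cf K G T t σ) := by
        rw [Finset.sum_erase T (by rw [filter_disj_univ G T hT, Finset.sum_empty])]
        simp only [Finset.sum_filter]
end
end

section
/- A tubing of a finite connected simple graph Γ with n vertices contains at most n tubes. -/
open scoped Classical
open TensorProduct

noncomputable section

open CDTub in
private lemma tubing_private_vert (G : FinGraph)
    (T : Finset (Finset ℕ)) (hT : IsTubing G T) (t : Finset ℕ) (ht : t ∈ T) :
    ∃ v ∈ t, ∀ s ∈ T, s ⊂ t → v ∉ s := by
  by_contra h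
  push_neg at h
  obtain ⟨hU, htube, hcomp⟩ := hT
  set P := T.filter (fun s => s ⊂ t) with hP
  have hmax : ∀ v ∈ t, ∃ m ∈ P, v ∈ m ∧ ∀ s ∈ P, m ⊆ s → m = s := by
    intro v hv
    obtain ⟨s, hs, hst, hvs⟩ := h v hv
    have hsP : s ∈ P := Finset.mem_filter.mpr ⟨hs, hst⟩
    have hne : (P.filter (fun s' => s ⊆ s')).Nonempty :=
      ⟨s, Finset.mem_filter.mpr ⟨hsP, subset_rfl⟩⟩
    obtain ⟨m, hm, hmmax⟩ : ∃ m ∈ P.filter (fun s' => s ⊆ s'), ∀ x ∈ P.filter (fun s' => s ⊆ s'), ¬ m < x := by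
      obtain ⟨m, hm⟩ := Finset.exists_maximal hne
      exact ⟨m, hm.1, fun x hx hlt => lt_irrefl m (lt_of_lt_of_le hlt (hm.2 hx hlt.le))⟩
    rw [Finset.mem_filter] at hm
    refine ⟨m, hm.1, hm.2 hvs, ?_⟩
    intro s' hs' hms'
    have hs'mem : s' ∈ P.filter (fun s' => s ⊆ s') :=
      Finset.mem_filter.mpr ⟨hs', hm.2.trans hms'⟩
    by_contra hne'
    exact hmmax s' hs'mem (lt_of_le_of_ne hms' hne')
  obtain ⟨⟨v0, hv0⟩, hsub, hconn⟩ := htube t ht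
  obtain ⟨m0, hm0P, hv0m0, hm0max⟩ := hmax v0 hv0
  have hm0t : m0 ⊂ t := (Finset.mem_filter.mp hm0P).2
  obtain ⟨w, hwt, hwm0⟩ := Finset.exists_of_ssubset hm0t
  have hstay : ∀ x, Relation.ReflTransGen
      (fun a b => a ∈ t ∧ b ∈ t ∧ G.Adj a b) v0 x → x ∈ m0 := by
    intro x hx
    induction hx with
    | refl => exact hv0m0
    | tail hR hbc ih =>
      obtain ⟨hbt, hct, hadj⟩ := hbc
      obtain ⟨m1, hm1P, hcm1, hm1max⟩ := hmax _ hct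
      by_cases heq : m0 = m1
      · exact heq ▸ hcm1
      · have hc := hcomp m0 (Finset.mem_filter.mp hm0P).1 m1
          (Finset.mem_filter.mp hm1P).1 heq
        rcases hc with h1 | h2 | ⟨hdisj, hfar⟩
        · exact (hm0max m1 hm1P h1) ▸ hcm1
        · exact h2 hcm1
        · exact absurd ⟨_, ih, _, hcm1, hadj⟩ hfar
  exact hwm0 (hstay w (hconn v0 hv0 w hwt))

open CDTub in
/-- A tubing of a connected graph with `n` vertices contains at most `n` tubes. -/
theorem tubing_card_le (G : FinGraph) (hc : IsConnGraph G)
    (T : Finset (Finset ℕ)) (hT : IsTubing G T) :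
    T.card ≤ G.verts.card := by
  classical
  have key := fun t ht => tubing_private_vert G T hT t ht
  choose! f hf1 hf2 using key
  have hmaps : ∀ t ∈ T, f t ∈ G.verts := fun t ht =>
    (hT.2.1 t ht).2.1 (hf1 t ht)
  refine Finset.card_le_card_of_injOn f hmaps ?_
  intro t ht t' ht' hfe
  by_contra hne
  rcases hT.2.2 t ht t' ht' hne with h1 | h2 | ⟨hdisj, _⟩
  · exact hf2 t' ht' t ht (lt_of_le_of_ne h1 hne) (hfe ▸ hf1 t ht)
  · exact hf2 t ht t' ht' (lt_of_le_of_ne h2 (Ne.symm hne)) (hfe ▸ hf1 t' ht')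
  · exact Finset.disjoint_left.mp hdisj (hf1 t ht) (hfe ▸ hf1 t' ht')
end
end

section
/- Let Γ be a finite connected simple graph with nonempty vertex set. No family of pairwise compatible proper tubes of Γ can cover the vertex set of Γ: if F is a set of proper tubes of Γ that are pairwise compatible, then the union of the tubes in F is a proper subset of the vertex set of Γ. -/
open scoped Classical
open TensorProduct

noncomputable section

open CDTub in
/-- No family of pairwise compatible proper tubes of a connected graph covers the
vertex set. -/
theorem proper_tubes_no_cover (G : FinGraph) (hc : IsConnGraph G)
    (F : Finset (Finset ℕ)) (hF : ∀ s ∈ F, IsTube G s ∧ s ≠ G.verts)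
    (hcomp : ∀ s ∈ F, ∀ s' ∈ F, s ≠ s' → Compatible G s s') :
    F.biUnion id ⊂ G.verts := by
  have hsub : F.biUnion id ⊆ G.verts := by
    intro v hv
    rcases Finset.mem_biUnion.mp hv with ⟨s, hs, hvs⟩
    exact (hF s hs).1.2.1 hvs
  rw [Finset.ssubset_iff_of_subset hsub]
  -- ∃ v ∈ G.verts, v ∉ F.biUnion id
  by_contra hno
  push_neg at hno
  have hcover : ∀ v ∈ G.verts, ∃ s ∈ F, v ∈ s := by
    intro v hv
    rcases Finset.mem_biUnion.mp (hno v hv) with ⟨s, hs, hvs⟩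
    exact ⟨s, hs, hvs⟩
  -- F is nonempty since G.verts is nonempty
  obtain ⟨v0, hv0⟩ := hc.1
  obtain ⟨s0, hs0, _⟩ := hcover v0 hv0
  -- take a maximal element m of F
  obtain ⟨m, hmF, hmax⟩ := (fun h => ⟨h.choose, h.choose_spec.1, fun x hx hlt => lt_irrefl _ (hlt.trans_le (h.choose_spec.2 hx hlt.le))⟩ :
    (∃ i, Maximal (· ∈ F) i) → ∃ m ∈ F, ∀ x ∈ F, ¬ m < x) (Finset.exists_maximal ⟨s0, hs0⟩)
  have hmtube := (hF m hmF).1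
  have hmne := (hF m hmF).2
  -- m is closed under adjacency within G.verts
  have hclosed : ∀ x ∈ m, ∀ y ∈ G.verts, G.Adj x y → y ∈ m := by
    intro x hx y hy hadj
    obtain ⟨s, hsF, hys⟩ := hcover y hy
    by_cases hsm : s = m
    · exact hsm ▸ hys
    rcases hcomp m hmF s hsF (fun h => hsm h.symm) with h | h | h
    · exact absurd (lt_of_le_of_ne (Finset.le_iff_subset.mpr h)
        (fun heq => hsm heq.symm)) (hmax s hsF)
    · exact h hys
    · exact absurd ⟨x, hx, y, hys, hadj⟩ h.2
  -- every vertex reachable from a vertex of m stays in m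
  obtain ⟨w0, hw0⟩ := hmtube.1
  have hw0v : w0 ∈ G.verts := hmtube.2.1 hw0
  have : ∀ y ∈ G.verts, y ∈ m := by
    intro y hy
    have hwalk := hc.2.2 w0 hw0v y hy
    induction hwalk with
    | refl => exact hw0
    | tail _ hbc ih => exact hclosed _ (ih hbc.1) _ hbc.2.1 hbc.2.2
  exact hmne (subset_antisymm hmtube.2.1 (fun y hy => this y hy))
end
end

section
/- The operations ▷ and ◁ on tubings of connected graphs form an L-algebra: for finite connected simple graphs Γ, Ω, Θ with tubings T, S, W respectively, the underlying connected graphs agree, Γ ∪_{T, S◁W} (Ω ∪_{S,W} Θ) = (Γ ∪_{T,S} Ω) ∪_{T▷S, W} Θ, and T ▷ (S ◁ W) = (T ▷ S) ◁ W as tubings of this graph. -/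
open scoped Classical
open TensorProduct

noncomputable section

namespace CDTub

lemma shiftF_union' (k : ℕ) (s t : Finset ℕ) :
    shiftF k (s ∪ t) = shiftF k s ∪ shiftF k t :=
  Finset.image_union _ _

lemma shiftF_shiftF' (k l : ℕ) (s : Finset ℕ) :
    shiftF k (shiftF l s) = shiftF (k + l) s := by
  unfold shiftF
  rw [Finset.image_image]
  apply Finset.image_congr
  intro a _
  simp only [Function.comp]
  omega

lemma shiftT_union' (k : ℕ) (A B : Finset (Finset ℕ)) :
    shiftT k (A ∪ B) = shiftT k A ∪ shiftT k B :=
  Finset.image_union _ _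

lemma shiftT_shiftT' (k l : ℕ) (W : Finset (Finset ℕ)) :
    shiftT k (shiftT l W) = shiftT (k + l) W := by
  unfold shiftT
  rw [Finset.image_image]
  apply Finset.image_congr
  intro s _
  exact shiftF_shiftF' k l s

lemma exists_crossing {R : ℕ → ℕ → Prop} {t : Finset ℕ} {u v : ℕ}
    (h : Relation.ReflTransGen R u v) (hu : u ∈ t) (hv : v ∉ t) :
    ∃ a ∈ t, ∃ b, b ∉ t ∧ R a b := by
  induction h with
  | refl => exact absurd hu hv
  | @tail b c h1 h2 ih =>
    by_cases hb : b ∈ t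
    · exact ⟨b, hb, c, hv, h2⟩
    · exact ih hb

lemma freeVerts_nonempty (G : FinGraph) (T : Finset (Finset ℕ))
    (hGc : IsConnGraph G) (hT : IsTubing G T) : (freeVerts G T).Nonempty := by
  by_cases hP : (properTubes G T).Nonempty
  · obtain ⟨t, htM⟩ := Finset.exists_maximal hP
    have htP := htM.1
    have htmax : ∀ x ∈ properTubes G T, ¬ t < x := fun x hx hlt => (not_le_of_gt hlt) (htM.2 hx hlt.le)
    have htT : t ∈ T := (Finset.mem_filter.mp htP).1
    have htne : t ≠ G.verts := (Finset.mem_filter.mp htP).2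
    have htube := hT.2.1 t htT
    obtain ⟨u, hu⟩ := htube.1
    have htsub := htube.2.1
    have hex : ∃ v ∈ G.verts, v ∉ t := by
      by_contra h
      push_neg at h
      exact htne (Finset.Subset.antisymm htsub h)
    obtain ⟨v, hvV, hvt⟩ := hex
    have hwalk := hGc.2.2 u (htsub hu) v hvV
    obtain ⟨a, hat, b, hbt, hR⟩ := exists_crossing hwalk hu hvt
    refine ⟨b, Finset.mem_filter.mpr ⟨hR.2.1, ?_⟩⟩
    intro s hsT hsne hbs
    have hst : s ≠ t := fun h => hbt (h ▸ hbs)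
    rcases hT.2.2 t htT s hsT (Ne.symm hst) with h1 | h2 | ⟨hdisj, hedge⟩
    · exact htmax s (Finset.mem_filter.mpr ⟨hsT, hsne⟩)
        (Finset.ssubset_iff_subset_ne.mpr ⟨h1, Ne.symm hst⟩)
    · exact hbt (h2 hbs)
    · exact hedge ⟨a, hat, b, hbs, hR.2.2⟩
  · obtain ⟨v, hv⟩ := hGc.1
    refine ⟨v, Finset.mem_filter.mpr ⟨hv, ?_⟩⟩
    intro s hsT hsne _
    exact hP ⟨s, Finset.mem_filter.mpr ⟨hsT, hsne⟩⟩

lemma max_shiftF (k : ℕ) (s : Finset ℕ) (h : s.Nonempty) :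
    WithBot.unbotD 0 (shiftF k s).max = WithBot.unbotD 0 s.max + k := by
  have h' : (shiftF k s).Nonempty := h.image _
  rw [← Finset.coe_max' h, ← Finset.coe_max' h']
  simp only [WithBot.unbotD_coe]
  apply le_antisymm
  · apply Finset.max'_le
    intro y hy
    obtain ⟨a, ha, rfl⟩ := Finset.mem_image.mp hy
    exact Nat.add_le_add_right (Finset.le_max' s a ha) k
  · exact Finset.le_max' (shiftF k s) (s.max' h + k)
      (Finset.mem_image_of_mem _ (Finset.max'_mem s h))

lemma joinG_adj (G Om : FinGraph) (T S : Finset (Finset ℕ)) (k v w : ℕ) :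
    (joinG G Om T S k).Adj v w ↔ (G.Adj v w ∨ (∃ a b, Om.Adj a b ∧ v = a + k ∧ w = b + k) ∨
      (v ≠ w ∧ v ∈ joinVerts G Om k ∧ w ∈ joinVerts G Om k ∧
        ((v = joinA G T ∧ w = joinB Om S k) ∨ (w = joinA G T ∧ v = joinB Om S k)))) :=
  Iff.rfl

lemma fv_trL (Om Th : FinGraph) (S W : Finset (Finset ℕ)) (m : ℕ)
    (hOmb : ∀ v ∈ Om.verts, v ≤ m) (hThb1 : ∀ v ∈ Th.verts, 1 ≤ v)
    (hOmne : Om.verts.Nonempty) (hThne : Th.verts.Nonempty)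
    (hSsub : ∀ s ∈ S, s ⊆ Om.verts) (hWsub : ∀ w ∈ W, w ⊆ Th.verts)
    (hWU : Th.verts ∈ W) :
    freeVerts (joinG Om Th S W m) (trL Om Th S W m) = freeVerts Om S := by
  obtain ⟨u0, hu0⟩ := hOmne
  obtain ⟨t0, ht0⟩ := hThne
  have hshift : ∀ w : Finset ℕ, w ⊆ Th.verts → ∀ v ∈ shiftF m w, m < v := by
    intro w hw v hv
    obtain ⟨a, ha, rfl⟩ := Finset.mem_image.mp hv
    have := hThb1 a (hw ha)
    omega
  have hThVmem : shiftF m Th.verts ∈ trL Om Th S W m := by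
    unfold trL shiftT
    exact Finset.mem_union_left _ (Finset.mem_union_right _ (Finset.mem_image_of_mem _ hWU))
  have hThVne : shiftF m Th.verts ≠ (joinG Om Th S W m).verts := by
    intro h
    have hu : u0 ∈ (joinG Om Th S W m).verts := Finset.mem_union_left _ hu0
    rw [← h] at hu
    have h1 := hshift Th.verts (Finset.Subset.refl _) u0 hu
    have h2 := hOmb u0 hu0
    omega
  have hpropne : ∀ s ∈ S, s ≠ Om.verts → s ≠ (joinG Om Th S W m).verts := by
    intro s hs _ h
    have hmem : t0 + m ∈ (joinG Om Th S W m).verts :=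
      Finset.mem_union_right _ (Finset.mem_image_of_mem _ ht0)
    rw [← h] at hmem
    have h1 := hOmb _ (hSsub s hs hmem)
    have h2 := hThb1 t0 ht0
    omega
  ext v
  simp only [freeVerts, Finset.mem_filter]
  constructor
  · rintro ⟨hvJ, hfree⟩
    have hvOm : v ∈ Om.verts := by
      rcases Finset.mem_union.mp hvJ with h | h
      · exact h
      · exact absurd h (hfree _ hThVmem hThVne)
    refine ⟨hvOm, ?_⟩
    intro s hs hsne
    refine hfree s ?_ (hpropne s hs hsne)
    unfold trL properTubes
    exact Finset.mem_union_left _ (Finset.mem_union_left _ (Finset.mem_filter.mpr ⟨hs, hsne⟩))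
  · rintro ⟨hvOm, hfree⟩
    refine ⟨Finset.mem_union_left _ hvOm, ?_⟩
    intro s hsTL hsne
    rcases Finset.mem_union.mp hsTL with hs | hs
    · rcases Finset.mem_union.mp hs with hs | hs
      · obtain ⟨hsS, hsneOm⟩ := Finset.mem_filter.mp hs
        exact hfree s hsS hsneOm
      · obtain ⟨w, hw, rfl⟩ := Finset.mem_image.mp hs
        intro hv
        have h1 := hshift w (hWsub w hw) v hv
        have h2 := hOmb v hvOm
        omega
    · exact absurd (Finset.mem_singleton.mp hs) hsne

lemma fv_trR (G Om : FinGraph) (T S : Finset (Finset ℕ)) (n : ℕ)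
    (hGb : ∀ v ∈ G.verts, v ≤ n) (hOmb1 : ∀ v ∈ Om.verts, 1 ≤ v)
    (hGne : G.verts.Nonempty) (hOmne : Om.verts.Nonempty)
    (hTsub : ∀ t ∈ T, t ⊆ G.verts) (hTU : G.verts ∈ T)
    (hSsub : ∀ s ∈ S, s ⊆ Om.verts) :
    freeVerts (joinG G Om T S n) (trR G Om T S n) = shiftF n (freeVerts Om S) := by
  obtain ⟨g0, hg0⟩ := hGne
  obtain ⟨u0, hu0⟩ := hOmne
  have hGVne : G.verts ≠ (joinG G Om T S n).verts := by
    intro h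
    have hmem : u0 + n ∈ (joinG G Om T S n).verts :=
      Finset.mem_union_right _ (Finset.mem_image_of_mem _ hu0)
    rw [← h] at hmem
    have h1 := hGb _ hmem
    have h2 := hOmb1 u0 hu0
    omega
  have hshne : ∀ t : Finset ℕ, t ⊆ Om.verts → shiftF n t ≠ (joinG G Om T S n).verts := by
    intro t ht h
    have hmem : g0 ∈ (joinG G Om T S n).verts := Finset.mem_union_left _ hg0
    rw [← h] at hmem
    obtain ⟨a, ha, hae⟩ := Finset.mem_image.mp hmem
    have h1 := hOmb1 a (ht ha)
    have h2 := hGb g0 hg0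
    omega
  have hGVmem : G.verts ∈ trR G Om T S n :=
    Finset.mem_union_left _ (Finset.mem_union_left _ hTU)
  ext v
  simp only [freeVerts, Finset.mem_filter]
  constructor
  · rintro ⟨hvJ, hfree⟩
    rcases Finset.mem_union.mp hvJ with hv | hv
    · exact absurd hv (hfree _ hGVmem hGVne)
    · obtain ⟨a, haOm, rfl⟩ := Finset.mem_image.mp hv
      refine Finset.mem_image.mpr ⟨a, Finset.mem_filter.mpr ⟨haOm, ?_⟩, rfl⟩
      intro s hsS hsne ha
      have hmem : shiftF n s ∈ trR G Om T S n := by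
        unfold trR shiftT properTubes
        exact Finset.mem_union_left _ (Finset.mem_union_right _
          (Finset.mem_image_of_mem _ (Finset.mem_filter.mpr ⟨hsS, hsne⟩)))
      exact hfree _ hmem (hshne s (hSsub s hsS)) (Finset.mem_image_of_mem _ ha)
  · intro hv
    obtain ⟨a, haF, rfl⟩ := Finset.mem_image.mp hv
    obtain ⟨haOm, hafree⟩ := Finset.mem_filter.mp haF
    refine ⟨Finset.mem_union_right _ (Finset.mem_image_of_mem _ haOm), ?_⟩
    intro s hsTR hsne
    rcases Finset.mem_union.mp hsTR with hs | hs
    · rcases Finset.mem_union.mp hs with hs | hs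
      · intro hmem
        have h1 := hGb _ (hTsub s hs hmem)
        have h2 := hOmb1 a haOm
        omega
      · obtain ⟨t, htP, rfl⟩ := Finset.mem_image.mp hs
        obtain ⟨htS, htne⟩ := Finset.mem_filter.mp htP
        intro hmem
        obtain ⟨c, hc, hce⟩ := Finset.mem_image.mp hmem
        have hca : c = a := by omega
        exact hafree t htS htne (hca ▸ hc)
    · exact absurd (Finset.mem_singleton.mp hs) hsne

lemma pt_trL (Om Th : FinGraph) (S W : Finset (Finset ℕ)) (m : ℕ)
    (hOmb : ∀ v ∈ Om.verts, v ≤ m) (hThb1 : ∀ v ∈ Th.verts, 1 ≤ v)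
    (hOmne : Om.verts.Nonempty) (hThne : Th.verts.Nonempty)
    (hSsub : ∀ s ∈ S, s ⊆ Om.verts) (hWsub : ∀ w ∈ W, w ⊆ Th.verts) :
    properTubes (joinG Om Th S W m) (trL Om Th S W m) = properTubes Om S ∪ shiftT m W := by
  obtain ⟨u0, hu0⟩ := hOmne
  obtain ⟨t0, ht0⟩ := hThne
  have hOmne' : ∀ s : Finset ℕ, s ⊆ Om.verts → s ≠ (joinG Om Th S W m).verts := by
    intro s hsub h
    have hmem : t0 + m ∈ (joinG Om Th S W m).verts :=
      Finset.mem_union_right _ (Finset.mem_image_of_mem _ ht0)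
    rw [← h] at hmem
    have h1 := hOmb _ (hsub hmem)
    have h2 := hThb1 t0 ht0
    omega
  have hshne : ∀ w ∈ W, shiftF m w ≠ (joinG Om Th S W m).verts := by
    intro w hw h
    have hmem : u0 ∈ (joinG Om Th S W m).verts := Finset.mem_union_left _ hu0
    rw [← h] at hmem
    obtain ⟨a, ha, hae⟩ := Finset.mem_image.mp hmem
    have h1 := hThb1 a (hWsub w hw ha)
    have h2 := hOmb u0 hu0
    omega
  ext s
  simp only [properTubes, trL, Finset.mem_filter, Finset.mem_union, Finset.mem_singleton]
  constructor
  · rintro ⟨(h | h) | h, hne⟩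
    · exact Or.inl h
    · exact Or.inr h
    · exact absurd h hne
  · rintro (h | h)
    · exact ⟨Or.inl (Or.inl h), hOmne' s (hSsub s h.1)⟩
    · refine ⟨Or.inl (Or.inr h), ?_⟩
      obtain ⟨w, hw, rfl⟩ := Finset.mem_image.mp h
      exact hshne w hw
  
lemma pt_trR (G Om : FinGraph) (T S : Finset (Finset ℕ)) (n : ℕ)
    (hGb : ∀ v ∈ G.verts, v ≤ n) (hOmb1 : ∀ v ∈ Om.verts, 1 ≤ v)
    (hGne : G.verts.Nonempty) (hOmne : Om.verts.Nonempty)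
    (hTsub : ∀ t ∈ T, t ⊆ G.verts) (hSsub : ∀ s ∈ S, s ⊆ Om.verts) :
    properTubes (joinG G Om T S n) (trR G Om T S n) = T ∪ shiftT n (properTubes Om S) := by
  obtain ⟨g0, hg0⟩ := hGne
  obtain ⟨u0, hu0⟩ := hOmne
  have hGne' : ∀ s : Finset ℕ, s ⊆ G.verts → s ≠ (joinG G Om T S n).verts := by
    intro s hsub h
    have hmem : u0 + n ∈ (joinG G Om T S n).verts :=
      Finset.mem_union_right _ (Finset.mem_image_of_mem _ hu0)
    rw [← h] at hmem
    have h1 := hGb _ (hsub hmem)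
    have h2 := hOmb1 u0 hu0
    omega
  have hshne : ∀ t : Finset ℕ, t ⊆ Om.verts → shiftF n t ≠ (joinG G Om T S n).verts := by
    intro t ht h
    have hmem : g0 ∈ (joinG G Om T S n).verts := Finset.mem_union_left _ hg0
    rw [← h] at hmem
    obtain ⟨a, ha, hae⟩ := Finset.mem_image.mp hmem
    have h1 := hOmb1 a (ht ha)
    have h2 := hGb g0 hg0
    omega
  ext s
  simp only [properTubes, trR, Finset.mem_filter, Finset.mem_union, Finset.mem_singleton]
  constructor
  · rintro ⟨(h | h) | h, hne⟩
    · exact Or.inl h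
    · exact Or.inr h
    · exact absurd h hne
  · rintro (h | h)
    · exact ⟨Or.inl (Or.inl h), hGne' s (hTsub s h)⟩
    · refine ⟨Or.inl (Or.inr h), ?_⟩
      obtain ⟨t, htP, rfl⟩ := Finset.mem_image.mp h
      exact hshne t (hSsub t (Finset.mem_filter.mp htP).1)

end CDTub

open CDTub in
/-- L-algebra identity for `▷` and `◁`: the two joined graphs coincide and
`T ▷ (S ◁ W) = (T ▷ S) ◁ W`. -/
theorem L_algebra_identity (G Om Th : FinGraph) (n m p : ℕ)
    (hG : G.verts = Finset.Icc 1 n) (hOm : Om.verts = Finset.Icc 1 m)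
    (hTh : Th.verts = Finset.Icc 1 p)
    (hGc : IsConnGraph G) (hOmc : IsConnGraph Om) (hThc : IsConnGraph Th)
    (T S W : Finset (Finset ℕ))
    (hT : IsTubing G T) (hS : IsTubing Om S) (hW : IsTubing Th W) :
    GEq (joinG G (joinG Om Th S W m) T (trL Om Th S W m) n)
        (joinG (joinG G Om T S n) Th (trR G Om T S n) W (n + m)) ∧
    trR G (joinG Om Th S W m) T (trL Om Th S W m) n =
      trL (joinG G Om T S n) Th (trR G Om T S n) W (n + m) := by
  have hGne : G.verts.Nonempty := hGc.1
  have hOmne : Om.verts.Nonempty := hOmc.1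
  have hThne : Th.verts.Nonempty := hThc.1
  have hGb : ∀ v ∈ G.verts, v ≤ n := fun v hv => (Finset.mem_Icc.mp (by rwa [hG] at hv)).2
  have hGb1 : ∀ v ∈ G.verts, 1 ≤ v := fun v hv => (Finset.mem_Icc.mp (by rwa [hG] at hv)).1
  have hOmb : ∀ v ∈ Om.verts, v ≤ m := fun v hv => (Finset.mem_Icc.mp (by rwa [hOm] at hv)).2
  have hOmb1 : ∀ v ∈ Om.verts, 1 ≤ v := fun v hv => (Finset.mem_Icc.mp (by rwa [hOm] at hv)).1
  have hThb1 : ∀ v ∈ Th.verts, 1 ≤ v := fun v hv => (Finset.mem_Icc.mp (by rwa [hTh] at hv)).1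
  have hTsub : ∀ t ∈ T, t ⊆ G.verts := fun t ht => (hT.2.1 t ht).2.1
  have hSsub : ∀ s ∈ S, s ⊆ Om.verts := fun s hs => (hS.2.1 s hs).2.1
  have hWsub : ∀ w ∈ W, w ⊆ Th.verts := fun w hw => (hW.2.1 w hw).2.1
  have hfvT := freeVerts_nonempty G T hGc hT
  have hfvS := freeVerts_nonempty Om S hOmc hS
  have hfvW := freeVerts_nonempty Th W hThc hW
  have hFVL := fv_trL Om Th S W m hOmb hThb1 hOmne hThne hSsub hWsub hW.1
  have hFVR := fv_trR G Om T S n hGb hOmb1 hGne hOmne hTsub hT.1 hSsub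
  have hB1 : joinB (joinG Om Th S W m) (trL Om Th S W m) n = joinB Om S n := by
    unfold joinB
    rw [hFVL]
  have hA3 : joinA (joinG G Om T S n) (trR G Om T S n) = joinA Om S + n := by
    unfold joinA
    rw [hFVR]
    exact max_shiftF n _ hfvS
  have hB3 : joinB Th W (n + m) = joinB Th W m + n := by
    unfold joinB
    omega
  have hA1G : joinA G T ∈ G.verts := by
    have e : joinA G T = (freeVerts G T).max' hfvT := by
      unfold joinA
      rw [← Finset.coe_max' hfvT]
      simp
    rw [e]
    exact (Finset.mem_filter.mp (Finset.max'_mem _ hfvT)).1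
  have hA2Om : joinA Om S ∈ Om.verts := by
    have e : joinA Om S = (freeVerts Om S).max' hfvS := by
      unfold joinA
      rw [← Finset.coe_max' hfvS]
      simp
    rw [e]
    exact (Finset.mem_filter.mp (Finset.max'_mem _ hfvS)).1
  have hB1sh : joinB Om S n ∈ shiftF n Om.verts := by
    have e : joinB Om S n = n + (freeVerts Om S).min' hfvS := by
      unfold joinB
      rw [← Finset.coe_min' hfvS]
      rfl
    rw [e]
    exact Finset.mem_image.mpr ⟨_, (Finset.mem_filter.mp (Finset.min'_mem _ hfvS)).1, by omega⟩
  have hB2sh : joinB Th W m ∈ shiftF m Th.verts := by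
    have e : joinB Th W m = m + (freeVerts Th W).min' hfvW := by
      unfold joinB
      rw [← Finset.coe_min' hfvW]
      rfl
    rw [e]
    exact Finset.mem_image.mpr ⟨_, (Finset.mem_filter.mp (Finset.min'_mem _ hfvW)).1, by omega⟩
  have hA1mem2 : joinA G T ∈ joinVerts G Om n := Finset.mem_union_left _ hA1G
  have hB1mem2 : joinB Om S n ∈ joinVerts G Om n := Finset.mem_union_right _ hB1sh
  have hA1memBig : joinA G T ∈ joinVerts G (joinG Om Th S W m) n :=
    Finset.mem_union_left _ hA1G
  have hB1memBig : joinB Om S n ∈ joinVerts G (joinG Om Th S W m) n := by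
    refine Finset.mem_union_right _ ?_
    exact Finset.image_subset_image Finset.subset_union_left hB1sh
  have hA2memJV1 : joinA Om S ∈ joinVerts Om Th m := Finset.mem_union_left _ hA2Om
  have hB2memJV1 : joinB Th W m ∈ joinVerts Om Th m := Finset.mem_union_right _ hB2sh
  have hA3mem : joinA Om S + n ∈ joinVerts (joinG G Om T S n) Th (n + m) :=
    Finset.mem_union_left _ (Finset.mem_union_right _ (Finset.mem_image_of_mem _ hA2Om))
  have hB3mem : joinB Th W m + n ∈ joinVerts (joinG G Om T S n) Th (n + m) := by
    obtain ⟨t, ht, hteq⟩ := Finset.mem_image.mp hB2sh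
    exact Finset.mem_union_right _ (Finset.mem_image.mpr ⟨t, ht, by omega⟩)
  have hJV : joinVerts G (joinG Om Th S W m) n = joinVerts (joinG G Om T S n) Th (n + m) := by
    show G.verts ∪ shiftF n (Om.verts ∪ shiftF m Th.verts)
        = (G.verts ∪ shiftF n Om.verts) ∪ shiftF (n + m) Th.verts
    rw [shiftF_union', shiftF_shiftF', Finset.union_assoc]
  refine ⟨⟨hJV, ?_⟩, ?_⟩
  · intro v w
    simp only [joinG_adj, hB1, hA3, hB3]
    constructor
    · rintro (h | ⟨a, b, hab | ⟨c, d, hcd, rfl, rfl⟩ |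
          ⟨hne, -, -, (⟨rfl, rfl⟩ | ⟨rfl, rfl⟩)⟩, rfl, rfl⟩ |
          ⟨hne, -, -, (⟨rfl, rfl⟩ | ⟨rfl, rfl⟩)⟩)
      · exact Or.inl (Or.inl h)
      · exact Or.inl (Or.inr (Or.inl ⟨a, b, hab, rfl, rfl⟩))
      · exact Or.inr (Or.inl ⟨c, d, hcd, by omega, by omega⟩)
      · exact Or.inr (Or.inr ⟨by omega, hA3mem, hB3mem, Or.inl ⟨rfl, rfl⟩⟩)
      · exact Or.inr (Or.inr ⟨by omega, hB3mem, hA3mem, Or.inr ⟨rfl, rfl⟩⟩)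
      · exact Or.inl (Or.inr (Or.inr ⟨hne, hA1mem2, hB1mem2, Or.inl ⟨rfl, rfl⟩⟩))
      · exact Or.inl (Or.inr (Or.inr ⟨hne, hB1mem2, hA1mem2, Or.inr ⟨rfl, rfl⟩⟩))
    · rintro ((h | ⟨a, b, hab, rfl, rfl⟩ | ⟨hne, -, -, (⟨rfl, rfl⟩ | ⟨rfl, rfl⟩)⟩) |
          ⟨c, d, hcd, rfl, rfl⟩ | ⟨hne, -, -, (⟨rfl, rfl⟩ | ⟨rfl, rfl⟩)⟩)
      · exact Or.inl h
      · exact Or.inr (Or.inl ⟨a, b, Or.inl hab, rfl, rfl⟩)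
      · exact Or.inr (Or.inr ⟨hne, hA1memBig, hB1memBig, Or.inl ⟨rfl, rfl⟩⟩)
      · exact Or.inr (Or.inr ⟨hne, hB1memBig, hA1memBig, Or.inr ⟨rfl, rfl⟩⟩)
      · exact Or.inr (Or.inl ⟨c + m, d + m, Or.inr (Or.inl ⟨c, d, hcd, rfl, rfl⟩),
          by omega, by omega⟩)
      · exact Or.inr (Or.inl ⟨joinA Om S, joinB Th W m,
          Or.inr (Or.inr ⟨by omega, hA2memJV1, hB2memJV1, Or.inl ⟨rfl, rfl⟩⟩), rfl, rfl⟩)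
      · exact Or.inr (Or.inl ⟨joinB Th W m, joinA Om S,
          Or.inr (Or.inr ⟨by omega, hB2memJV1, hA2memJV1, Or.inr ⟨rfl, rfl⟩⟩), rfl, rfl⟩)
  · have hPTL := pt_trL Om Th S W m hOmb hThb1 hOmne hThne hSsub hWsub
    have hPTR := pt_trR G Om T S n hGb hOmb1 hGne hOmne hTsub hSsub
    show T ∪ shiftT n (properTubes (joinG Om Th S W m) (trL Om Th S W m)) ∪
        {joinVerts G (joinG Om Th S W m) n}
        = properTubes (joinG G Om T S n) (trR G Om T S n) ∪ shiftT (n + m) W ∪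
          {joinVerts (joinG G Om T S n) Th (n + m)}
    rw [hPTL, hPTR, hJV, shiftT_union', shiftT_shiftT',
      ← Finset.union_assoc T (shiftT n (properTubes Om S)) (shiftT (n + m) W)]
end
end
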